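/- arXiv:2207.13244 — 8 statements merged into one kernel-verified Lean document; each statement's English description precedes it below -/
import Mathlib

section
/- For any bipartite graph G and any integer k ≥ 2, every two proper k-colorings of G are Kempe equivalent. -/
open SimpleGraph

variable {V : Type*}

/-- `c` is a proper `k`-coloring of the simple graph `G`. -/
def IsProperColoring (G : SimpleGraph V) (k : ℕ) (c : V → Fin k) : Prop :=
  ∀ ⦃u v : V⦄, G.Adj u v → c u ≠ c v

/-- The subgraph of `G` spanned by the vertices colored `i` or `j` (all other
vertices are isolated in this graph). -/
def twoColorSub (G : SimpleGraph V) {k : ℕ} (c : V → Fin k) (i j : Fin k) :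
    SimpleGraph V where
  Adj u v := G.Adj u v ∧ (c u = i ∨ c u = j) ∧ (c v = i ∨ c v = j)
  symm := ⟨fun _ _ h => ⟨h.1.symm, h.2.2, h.2.1⟩⟩
  loopless := ⟨fun v h => G.loopless.irrefl v h.1⟩

/-- A single Kempe change: swap the colors `i` and `j` on the connected component
of the `(i,j)`-colored subgraph containing the vertex `v₀`. -/
def KempeStep (G : SimpleGraph V) {k : ℕ} (c c' : V → Fin k) : Prop :=
  ∃ i j : Fin k, i ≠ j ∧ ∃ v₀ : V,
    (∀ v : V, (twoColorSub G c i j).Reachable v₀ v →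
      (c v = i → c' v = j) ∧ (c v = j → c' v = i) ∧ (c v ≠ i → c v ≠ j → c' v = c v)) ∧
    (∀ v : V, ¬ (twoColorSub G c i j).Reachable v₀ v → c' v = c v)

/-- Two colorings are Kempe equivalent if one is obtained from the other by a
finite sequence of Kempe changes. -/
def KempeEquiv (G : SimpleGraph V) {k : ℕ} (c c' : V → Fin k) : Prop :=
  Relation.ReflTransGen (fun a b : V → Fin k => KempeStep G a b) c c'

/-- `G` is obtained from a bipartite graph with parts `S` and `Sᶜ` by adding the
edges of `H`, each of which joins two vertices in the same part. -/
def IsBPlusE (G : SimpleGraph V) (S : Set V) (H : SimpleGraph V) : Prop :=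
  H ≤ G ∧
  (∀ u v : V, G.Adj u v → ¬ H.Adj u v → (u ∈ S ↔ v ∉ S)) ∧
  (∀ u v : V, H.Adj u v → (u ∈ S ↔ v ∈ S))

section KempeAux

variable {V : Type*}

private lemma fin2_trans_ne : ∀ a b c : Fin 2, a ≠ b → b ≠ c → a = c := by decide

private lemma fin2_ne_iff : ∀ a b : Fin 2, a ≠ b → (a = 0 ↔ b ≠ 0) := by decide

/-- Alternation along a Kempe chain in a bipartite graph. -/
private lemma reach_color (G : SimpleGraph V) {k : ℕ} {c : V → Fin k}
    (hc : IsProperColoring G k c) (p : V → Fin 2)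
    (hp : ∀ ⦃u w : V⦄, G.Adj u w → p u ≠ p w) {i j : Fin k}
    (v : V) (hv : c v = i) :
    ∀ u, (twoColorSub G c i j).Reachable v u →
      (c u = i ∧ p u = p v) ∨ (c u = j ∧ p u ≠ p v) := by
  intro u h
  rw [SimpleGraph.reachable_iff_reflTransGen] at h
  induction h with
  | refl => exact Or.inl ⟨hv, rfl⟩
  | @tail b u _ hadj ih =>
    obtain ⟨hG, hb, hu⟩ := hadj
    have hne : c b ≠ c u := hc hG
    have hpne : p b ≠ p u := hp hG
    rcases ih with ⟨hbi, hbp⟩ | ⟨hbj, hbp⟩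
    · refine Or.inr ⟨?_, ?_⟩
      · rcases hu with h | h
        · exact absurd (hbi.trans h.symm) hne
        · exact h
      · intro hco; exact hpne (hbp ▸ hco).symm
    · refine Or.inl ⟨?_, ?_⟩
      · rcases hu with h | h
        · exact h
        · exact absurd (hbj.trans h.symm) hne
      · exact fin2_trans_ne _ _ _ hpne.symm hbp

private lemma swap_ne {k : ℕ} {i j a b : Fin k} (hij : i ≠ j) (hab : a ≠ b) :
    (if a = i then j else if a = j then i else a) ≠
      (if b = i then j else if b = j then i else b) := by
  split_ifs <;> simp_all
  all_goals (intro hh; subst hh; simp_all)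

private lemma kempeStep_symm {G : SimpleGraph V} {k : ℕ} {a b : V → Fin k}
    (h : KempeStep G a b) : KempeStep G b a := by
  obtain ⟨i, j, hij, v₀, hin, hout⟩ := h
  have hmem : ∀ u, ((b u = i ∨ b u = j) ↔ (a u = i ∨ a u = j)) := by
    intro u
    by_cases hu : (twoColorSub G a i j).Reachable v₀ u
    · obtain ⟨h1, h2, h3⟩ := hin u hu
      constructor
      · intro hb
        by_contra hna
        push_neg at hna
        rw [h3 hna.1 hna.2] at hb
        exact hb.elim hna.1 hna.2
      · rintro (ha | ha)
        · exact Or.inr (h1 ha)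
        · exact Or.inl (h2 ha)
    · rw [hout u hu]
  have hgr : twoColorSub G b i j = twoColorSub G a i j := by
    ext u w
    show G.Adj u w ∧ _ ∧ _ ↔ G.Adj u w ∧ _ ∧ _
    rw [hmem u, hmem w]
  refine ⟨i, j, hij, v₀, ?_, ?_⟩
  · intro u hu
    rw [hgr] at hu
    obtain ⟨h1, h2, h3⟩ := hin u hu
    refine ⟨?_, ?_, ?_⟩
    · intro hb
      by_cases ha : a u = i
      · exact absurd ((h1 ha).symm.trans hb) hij.symm
      by_cases ha2 : a u = j
      · exact ha2
      · exact absurd ((h3 ha ha2).symm.trans hb) ha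
    · intro hb
      by_cases ha : a u = i
      · exact ha
      by_cases ha2 : a u = j
      · exact absurd ((h2 ha2).symm.trans hb) hij
      · exact absurd ((h3 ha ha2).symm.trans hb) ha2
    · intro hb1 hb2
      by_cases ha : a u = i
      · exact absurd (h1 ha) hb2
      by_cases ha2 : a u = j
      · exact absurd (h2 ha2) hb1
      · exact (h3 ha ha2).symm
  · intro u hu
    rw [hgr] at hu
    exact (hout u hu).symm

/-- Every proper coloring is Kempe equivalent to the canonical "target" coloring
`t` refining the bipartition `p`. -/
private lemma kempe_to_target (G : SimpleGraph V) [Fintype V] {k : ℕ}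
    (p : V → Fin 2) (hp : ∀ ⦃u w : V⦄, G.Adj u w → p u ≠ p w)
    (t : V → Fin k) (hteq : ∀ u w, p u = p w → t u = t w)
    (htne : ∀ u w, p u ≠ p w → t u ≠ t w) :
    ∀ (n : ℕ) (c : V → Fin k), IsProperColoring G k c →
      (Finset.univ.filter (fun v => c v ≠ t v)).card ≤ n → KempeEquiv G c t := by
  intro n
  induction n with
  | zero =>
    intro c _ hcard
    have hfe : (Finset.univ.filter (fun v => c v ≠ t v)) = ∅ :=
      Finset.card_eq_zero.mp (Nat.le_zero.mp hcard)
    have : c = t := by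
      funext u
      by_contra hne
      have : u ∈ Finset.univ.filter (fun v => c v ≠ t v) := by
        simp [hne]
      rw [hfe] at this
      exact absurd this (Finset.notMem_empty u)
    rw [this]
    exact Relation.ReflTransGen.refl
  | succ n ih =>
    intro c hc hcard
    by_cases h0 : (Finset.univ.filter (fun v => c v ≠ t v)).card = 0
    · exact ih c hc (by omega)
    obtain ⟨v, hv⟩ := Finset.card_pos.mp (Nat.pos_of_ne_zero h0)
    have hvne : c v ≠ t v := (Finset.mem_filter.mp hv).2
    set i := c v with hidef
    set j := t v with hjdef
    have hij : i ≠ j := hvne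
    haveI : ∀ a b : V, Decidable ((twoColorSub G c i j).Reachable a b) :=
      fun _ _ => Classical.dec _
    set c₂ : V → Fin k := fun u =>
      if (twoColorSub G c i j).Reachable v u then
        (if c u = i then j else if c u = j then i else c u)
      else c u with hc₂def
    have key := reach_color G hc p hp (i := i) (j := j) v rfl
    -- the Kempe step
    have hstep : KempeStep G c c₂ := by
      refine ⟨i, j, hij, v, ?_, ?_⟩
      · intro u hu
        refine ⟨?_, ?_, ?_⟩
        · intro h; simp [hc₂def, if_pos hu, h]
        · intro h; simp [hc₂def, if_pos hu, h, hij.symm]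
        · intro h1 h2; simp [hc₂def, if_pos hu, h1, h2]
      · intro u hu
        simp [hc₂def, if_neg hu]
    -- c₂ is proper
    have hc₂ : IsProperColoring G k c₂ := by
      intro u w hadj
      have hcne : c u ≠ c w := hc hadj
      by_cases hu : (twoColorSub G c i j).Reachable v u <;>
        by_cases hw : (twoColorSub G c i j).Reachable v w
      · simp only [hc₂def, if_pos hu, if_pos hw]
        exact swap_ne hij hcne
      · have hnot : ¬((c u = i ∨ c u = j) ∧ (c w = i ∨ c w = j)) := by
          rintro ⟨h1, h2⟩
          exact hw (hu.trans (SimpleGraph.Adj.reachable ⟨hadj, h1, h2⟩))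
        simp only [hc₂def, if_pos hu, if_neg hw]
        by_cases hcu : c u = i ∨ c u = j
        · have hcw : ¬(c w = i ∨ c w = j) := fun h => hnot ⟨hcu, h⟩
          push_neg at hcw
          rcases hcu with h | h <;> simp [h, hij, Ne.symm hij, Ne.symm hcw.1, Ne.symm hcw.2]
        · push_neg at hcu
          simp [hcu.1, hcu.2, hcne]
      · have hnot : ¬((c w = i ∨ c w = j) ∧ (c u = i ∨ c u = j)) := by
          rintro ⟨h1, h2⟩
          exact hu (hw.trans (SimpleGraph.Adj.reachable ⟨hadj.symm, h1, h2⟩))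
        simp only [hc₂def, if_pos hw, if_neg hu]
        by_cases hcw : c w = i ∨ c w = j
        · have hcu : ¬(c u = i ∨ c u = j) := fun h => hnot ⟨hcw, h⟩
          push_neg at hcu
          rcases hcw with h | h <;> simp [h, hij.symm, hcu.1, hcu.2]
        · push_neg at hcw
          simp [hcw.1, hcw.2, hcne]
      · simp only [hc₂def, if_neg hu, if_neg hw]
        exact hcne
    -- every vertex that was correct stays correct
    have hsub : (Finset.univ.filter (fun u => c₂ u ≠ t u)) ⊆
        (Finset.univ.filter (fun u => c u ≠ t u)) := by
      intro u hu
      simp only [Finset.mem_filter, Finset.mem_univ, true_and] at hu ⊢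
      intro hgood
      apply hu
      by_cases hr : (twoColorSub G c i j).Reachable v u
      · rcases key u hr with ⟨hcu, hpu⟩ | ⟨hcu, hpu⟩
        · exact (hij (hcu.symm.trans (hgood.trans ((hteq u v hpu).trans hjdef.symm)))).elim
        · exact ((htne u v hpu) ((hgood.symm.trans hcu).trans hjdef)).elim
      · simp [hc₂def, if_neg hr, hgood]
    -- and v becomes correct
    have hvfix : c₂ v = t v := by
      have hr : (twoColorSub G c i j).Reachable v v := SimpleGraph.Reachable.refl v
      simp [hc₂def, if_pos hr, hidef, hjdef]
    have hss : (Finset.univ.filter (fun u => c₂ u ≠ t u)) ⊂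
        (Finset.univ.filter (fun u => c u ≠ t u)) := by
      rw [Finset.ssubset_iff_of_subset hsub]
      exact ⟨v, hv, by simp [hvfix]⟩
    have hlt := Finset.card_lt_card hss
    exact Relation.ReflTransGen.head hstep (ih c₂ hc₂ (by omega))

end KempeAux

/-- For any bipartite graph `G` and any integer `k ≥ 2`, every two
proper `k`-colorings of `G` are Kempe equivalent. -/
theorem kempe_equiv_of_bipartite {V : Type*} [Fintype V] (G : SimpleGraph V)
    (hbip : G.Colorable 2) (k : ℕ) (hk : 2 ≤ k)
    (c c' : V → Fin k) (hc : IsProperColoring G k c) (hc' : IsProperColoring G k c') :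
    KempeEquiv G c c' := by
  classical
  obtain ⟨C2⟩ := hbip
  set p : V → Fin 2 := fun v => C2 v with hpdef
  have hp : ∀ ⦃u w : V⦄, G.Adj u w → p u ≠ p w := fun u w h => C2.valid h
  set t : V → Fin k := fun v => if p v = 0 then ⟨0, by omega⟩ else ⟨1, by omega⟩ with htdef
  have hteq : ∀ u w, p u = p w → t u = t w := by
    intro u w h
    simp [htdef, h]
  have htne : ∀ u w, p u ≠ p w → t u ≠ t w := by
    intro u w h
    have h2 := fin2_ne_iff _ _ h
    by_cases h0 : p u = 0
    · have h3 : p w ≠ 0 := h2.mp h0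
      simp only [htdef, if_pos h0, if_neg h3]
      intro he
      exact absurd (congrArg Fin.val he) (by simp)
    · have h3 : p w = 0 := by
        by_contra h4
        exact h0 (h2.mpr h4)
      simp only [htdef, if_neg h0, if_pos h3]
      intro he
      exact absurd (congrArg Fin.val he) (by simp)
  have hb : ∀ cc : V → Fin k,
      (Finset.univ.filter (fun v => cc v ≠ t v)).card ≤ Fintype.card V := by
    intro cc
    calc (Finset.univ.filter (fun v => cc v ≠ t v)).card
        ≤ Finset.univ.card := Finset.card_filter_le _ _
      _ = Fintype.card V := rfl
  have h1 := kempe_to_target G p hp t hteq htne (Fintype.card V) c hc (hb c)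
  have h2 := kempe_to_target G p hp t hteq htne (Fintype.card V) c' hc' (hb c')
  exact h1.trans ((@Relation.ReflTransGen.stdSymm _ _ ⟨fun _ _ hs => kempeStep_symm hs⟩).symm _ _ h2)
end

section
/- Let G be a d-degenerate graph with d ≥ 1. For any integer k > d, every two proper k-colorings of G are Kempe equivalent. -/
open SimpleGraph

variable {V : Type*}

namespace KempeAux

open Relation

variable {k : ℕ}

/-- Delete all edges at `v`. -/
def erase (G : SimpleGraph V) (v : V) : SimpleGraph V where
  Adj a b := G.Adj a b ∧ a ≠ v ∧ b ≠ v
  symm := ⟨fun _ _ h => ⟨h.1.symm, h.2.2, h.2.1⟩⟩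
  loopless := ⟨fun a h => G.loopless.irrefl a h.1⟩

theorem erase_le (G : SimpleGraph V) (v : V) : erase G v ≤ G := fun _ _ h => h.1

open Classical in
noncomputable def kswap (G : SimpleGraph V) (γ : V → Fin k) (i j : Fin k) (v₀ : V) :
    V → Fin k :=
  fun u => if (twoColorSub G γ i j).Reachable v₀ u then Equiv.swap i j (γ u) else γ u

theorem twoColorSub_comm (G : SimpleGraph V) (γ : V → Fin k) (i j : Fin k) :
    twoColorSub G γ i j = twoColorSub G γ j i := by
  ext a b
  exact ⟨fun ⟨h, h1, h2⟩ => ⟨h, h1.symm, h2.symm⟩, fun ⟨h, h1, h2⟩ => ⟨h, h1.symm, h2.symm⟩⟩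

theorem kswap_comm (G : SimpleGraph V) (γ : V → Fin k) (i j : Fin k) (v₀ : V) :
    kswap G γ i j v₀ = kswap G γ j i v₀ := by
  funext u
  unfold kswap
  rw [twoColorSub_comm G γ i j, Equiv.swap_comm]

theorem kempeStep_kswap {G : SimpleGraph V} {γ : V → Fin k} {i j : Fin k} (hij : i ≠ j)
    (v₀ : V) : KempeStep G γ (kswap G γ i j v₀) := by
  refine ⟨i, j, hij, v₀, ?_, ?_⟩
  · intro u hr
    simp only [kswap, if_pos hr]
    exact ⟨fun h => by rw [h, Equiv.swap_apply_left],
      fun h => by rw [h, Equiv.swap_apply_right],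
      fun h1 h2 => by rw [Equiv.swap_apply_of_ne_of_ne h1 h2]⟩
  · intro u hr
    simp only [kswap, if_neg hr]

theorem kempeStep_eq {G : SimpleGraph V} {γ γ' : V → Fin k} (h : KempeStep G γ γ') :
    ∃ i j : Fin k, i ≠ j ∧ ∃ v₀ : V, γ' = kswap G γ i j v₀ := by
  obtain ⟨i, j, hij, v₀, h1, h2⟩ := h
  refine ⟨i, j, hij, v₀, funext fun u => ?_⟩
  by_cases hr : (twoColorSub G γ i j).Reachable v₀ u
  · simp only [kswap, if_pos hr]
    by_cases hi : γ u = i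
    · rw [hi, Equiv.swap_apply_left]; exact (h1 u hr).1 hi
    by_cases hj : γ u = j
    · rw [hj, Equiv.swap_apply_right]; exact (h1 u hr).2.1 hj
    · rw [Equiv.swap_apply_of_ne_of_ne hi hj]; exact (h1 u hr).2.2 hi hj
  · simp only [kswap, if_neg hr]; exact h2 u hr

theorem reachable_of_isolated {T : SimpleGraph V} {v : V} (hiso : ∀ u, ¬ T.Adj v u)
    {u : V} (h : T.Reachable v u) : v = u := by
  obtain ⟨p⟩ := h
  cases p with
  | nil => rfl
  | cons h' _ => exact absurd h' (hiso _)

theorem kswap_isolated [DecidableEq V] {G : SimpleGraph V} {γ : V → Fin k} {i j : Fin k}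
    {v₀ : V} (hiso : ∀ u, ¬ (twoColorSub G γ i j).Adj v₀ u) :
    kswap G γ i j v₀ = Function.update γ v₀ (Equiv.swap i j (γ v₀)) := by
  funext u
  by_cases hu : u = v₀
  · subst hu
    simp only [kswap, if_pos (Reachable.refl u), Function.update_self]
  · have hnr : ¬ (twoColorSub G γ i j).Reachable v₀ u := fun hr =>
      hu (reachable_of_isolated hiso hr).symm
    simp only [kswap, if_neg hnr, Function.update_of_ne hu]

theorem kswap_proper {G : SimpleGraph V} {γ : V → Fin k} {i j : Fin k} {v₀ : V}
    (hγ : IsProperColoring G k γ) : IsProperColoring G k (kswap G γ i j v₀) := by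
  intro u w hadj
  simp only [kswap]
  by_cases hu : (twoColorSub G γ i j).Reachable v₀ u <;>
    by_cases hw : (twoColorSub G γ i j).Reachable v₀ w
  · rw [if_pos hu, if_pos hw]
    exact fun h => hγ hadj ((Equiv.swap i j).injective h)
  · rw [if_pos hu, if_neg hw]
    intro h
    by_cases hi : γ u = i
    · rw [hi, Equiv.swap_apply_left] at h
      exact hw (hu.trans (SimpleGraph.Adj.reachable ⟨hadj, Or.inl hi, Or.inr h.symm⟩))
    by_cases hj : γ u = j
    · rw [hj, Equiv.swap_apply_right] at h
      exact hw (hu.trans (SimpleGraph.Adj.reachable ⟨hadj, Or.inr hj, Or.inl h.symm⟩))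
    · rw [Equiv.swap_apply_of_ne_of_ne hi hj] at h
      exact hγ hadj h
  · rw [if_neg hu, if_pos hw]
    intro h
    by_cases hi : γ w = i
    · rw [hi, Equiv.swap_apply_left] at h
      exact hu (hw.trans (SimpleGraph.Adj.reachable ⟨hadj.symm, Or.inl hi, Or.inr h⟩))
    by_cases hj : γ w = j
    · rw [hj, Equiv.swap_apply_right] at h
      exact hu (hw.trans (SimpleGraph.Adj.reachable ⟨hadj.symm, Or.inr hj, Or.inl h⟩))
    · rw [Equiv.swap_apply_of_ne_of_ne hi hj] at h
      exact hγ hadj h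
  · rw [if_neg hu, if_neg hw]
    exact hγ hadj

theorem walk_erase (T : SimpleGraph V) (v w : V) (hw : ∀ u, T.Adj v u → u = w) :
    ∀ n (a b : V), ∀ p : T.Walk a b, p.length ≤ n → a ≠ v → b ≠ v →
      (erase T v).Reachable a b := by
  intro n
  induction n with
  | zero =>
      intro a b p hp ha hb
      have hab : a = b := p.eq_of_length_eq_zero (Nat.le_zero.mp hp)
      subst hab
      exact Reachable.refl a
  | succ n ih =>
      intro a b p hp ha hb
      cases p with
      | nil => exact Reachable.refl a
      | @cons _ c _ h q =>
          by_cases hc : c = v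
          · cases q with
            | nil => exact absurd hc hb
            | @cons _ c2 _ h2 q2 =>
                have h2' : T.Adj v c2 := hc ▸ h2
                have hc2 : c2 ≠ v := h2'.ne'
                have haw : a = c2 := (hw a (hc ▸ h.symm)).trans (hw c2 h2').symm
                have hlen : q2.length ≤ n := by
                  simp only [SimpleGraph.Walk.length_cons] at hp; omega
                have hr := ih c2 b q2 hlen hc2 hb
                rw [haw]; exact hr
          · have hadj : (erase T v).Adj a c := ⟨h, ha, hc⟩
            have hlen : q.length ≤ n := by
              simp only [SimpleGraph.Walk.length_cons] at hp; omega
            exact hadj.reachable.trans (ih c b q hlen hc hb)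

theorem reachable_erase (T : SimpleGraph V) (v w : V)
    (hw : ∀ u, T.Adj v u → u = w) {a b : V} (ha : a ≠ v) (hb : b ≠ v) :
    T.Reachable a b ↔ (erase T v).Reachable a b := by
  constructor
  · intro hr
    obtain ⟨p⟩ := hr
    exact walk_erase T v w hw p.length a b p le_rfl ha hb
  · intro hr
    exact hr.mono (erase_le T v)

theorem twoColorSub_erase (G : SimpleGraph V) (v : V) (γ : V → Fin k) (i j : Fin k) :
    twoColorSub (erase G v) γ i j = erase (twoColorSub G γ i j) v := by
  ext a b
  exact ⟨fun ⟨⟨h, ha, hb⟩, c1, c2⟩ => ⟨⟨h, c1, c2⟩, ha, hb⟩,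
    fun ⟨⟨h, c1, c2⟩, ha, hb⟩ => ⟨⟨h, ha, hb⟩, c1, c2⟩⟩

theorem twoColorSub_congr (G : SimpleGraph V) (v : V) {γ δ : V → Fin k}
    (h : ∀ u, u ≠ v → γ u = δ u) (i j : Fin k) :
    twoColorSub (erase G v) γ i j = twoColorSub (erase G v) δ i j := by
  ext a b
  constructor
  · rintro ⟨hadj, c1, c2⟩
    rw [h a hadj.2.1] at c1
    rw [h b hadj.2.2] at c2
    exact ⟨hadj, c1, c2⟩
  · rintro ⟨hadj, c1, c2⟩
    rw [← h a hadj.2.1] at c1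
    rw [← h b hadj.2.2] at c2
    exact ⟨hadj, c1, c2⟩

theorem lift_easy (G : SimpleGraph V) (v : V) (γ δ : V → Fin k) (i j : Fin k)
    (hij : i ≠ j) (u₀ : V) (hu₀ : u₀ ≠ v)
    (hγ : IsProperColoring G k γ) (hagree : ∀ u, u ≠ v → γ u = δ u)
    (w : V) (hw : ∀ u, (twoColorSub G γ i j).Adj v u → u = w) :
    ∃ γ', IsProperColoring G k γ' ∧
      (∀ u, u ≠ v → γ' u = kswap (erase G v) δ i j u₀ u) ∧ KempeEquiv G γ γ' := by
  refine ⟨kswap G γ i j u₀, kswap_proper hγ, ?_,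
    ReflTransGen.single (kempeStep_kswap hij u₀)⟩
  intro u hu
  have hT : twoColorSub (erase G v) δ i j = erase (twoColorSub G γ i j) v := by
    rw [← twoColorSub_congr G v hagree i j, twoColorSub_erase]
  have hiff := reachable_erase (twoColorSub G γ i j) v w hw hu₀ hu
  by_cases hr : (twoColorSub G γ i j).Reachable u₀ u
  · have hr' : (twoColorSub (erase G v) δ i j).Reachable u₀ u := by
      rw [hT]; exact hiff.mp hr
    simp only [kswap, if_pos hr, if_pos hr', hagree u hu]
  · have hr' : ¬ (twoColorSub (erase G v) δ i j).Reachable u₀ u := by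
      rw [hT]; exact fun h => hr (hiff.mpr h)
    simp only [kswap, if_neg hr, if_neg hr', hagree u hu]

theorem one_j_neighbor [Fintype V] (G : SimpleGraph V) (v : V) (d : ℕ)
    (hnb : ({u : V | G.Adj v u}).ncard ≤ d) (hk : d < k)
    (γ : V → Fin k) (hγ : IsProperColoring G k γ) (i j : Fin k) (hij : i ≠ j)
    (hγv : γ v = i)
    (hB2 : ∀ a : Fin k, a ≠ i → a ≠ j → ∃ u, G.Adj v u ∧ γ u = a) :
    ∃ w, ∀ u, (twoColorSub G γ i j).Adj v u → u = w := by
  classical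
  suffices h : ∃ w, ∀ u, G.Adj v u → γ u = j → u = w by
    obtain ⟨w, hw⟩ := h
    refine ⟨w, fun u hu => ?_⟩
    obtain ⟨hadj, _, hcu⟩ := hu
    rcases hcu with hh | hh
    · exact absurd (hγv.trans hh.symm) (hγ hadj)
    · exact hw u hadj hh
  set N : Finset V := Finset.univ.filter (fun u => G.Adj v u) with hN
  have hNcard : N.card ≤ d := by
    have : {u : V | G.Adj v u} = ↑N := by
      ext u; simp [hN]
    rw [this, Set.ncard_coe_finset] at hnb
    exact hnb
  set f : Fin k → V := fun a =>
    if h : ∃ u, G.Adj v u ∧ γ u = a then h.choose else v with hf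
  have hfspec : ∀ a : Fin k, a ≠ i → a ≠ j → G.Adj v (f a) ∧ γ (f a) = a := by
    intro a hai haj
    have hex := hB2 a hai haj
    simp only [hf, dif_pos hex]
    exact hex.choose_spec
  set A : Finset (Fin k) := ({i, j} : Finset (Fin k))ᶜ with hA
  have hmemA : ∀ a : Fin k, a ∈ A ↔ a ≠ i ∧ a ≠ j := by
    intro a; simp [hA, not_or]
  set B : Finset V := A.image f with hB
  set W : Finset V := N.filter (fun u => γ u = j) with hW
  have hBN : B ⊆ N := by
    intro u hu
    obtain ⟨a, haA, hfa⟩ := Finset.mem_image.mp hu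
    obtain ⟨h1, _⟩ := hfspec a ((hmemA a).mp haA).1 ((hmemA a).mp haA).2
    rw [← hfa]
    simp [hN, h1]
  have hdisj : Disjoint B W := by
    rw [Finset.disjoint_left]
    intro u huB huW
    obtain ⟨a, haA, hfa⟩ := Finset.mem_image.mp huB
    obtain ⟨ha1, ha2⟩ := (hmemA a).mp haA
    obtain ⟨_, hfa2⟩ := hfspec a ha1 ha2
    have : γ u = j := (Finset.mem_filter.mp huW).2
    rw [← hfa, hfa2] at this
    exact ha2 this
  have hBcard : B.card = A.card := by
    rw [hB]
    apply Finset.card_image_of_injOn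
    intro a ha b hb hab
    have h1 := (hfspec a ((hmemA a).mp ha).1 ((hmemA a).mp ha).2).2
    have h2 := (hfspec b ((hmemA b).mp hb).1 ((hmemA b).mp hb).2).2
    rw [← h1, ← h2, hab]
  have h2k : 2 ≤ k := by
    have := Finset.card_le_univ ({i, j} : Finset (Fin k))
    simpa [hij] using this
  have hAcard : A.card = k - 2 := by
    rw [hA, Finset.card_compl]
    simp [hij]
  have hsum : B.card + W.card ≤ d := by
    calc B.card + W.card = (B ∪ W).card := (Finset.card_union_of_disjoint hdisj).symm
    _ ≤ N.card := Finset.card_le_card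
        (Finset.union_subset hBN (Finset.filter_subset _ _))
    _ ≤ d := hNcard
  have hW1 : W.card ≤ 1 := by
    rw [hBcard, hAcard] at hsum
    omega
  have hne : Nonempty V := ⟨v⟩
  rcases Finset.card_le_one_iff_subset_singleton.mp hW1 with ⟨x, hx⟩
  refine ⟨x, fun u hu hj' => ?_⟩
  have : u ∈ W := by simp [hW, hN, hu, hj']
  have := hx this
  simpa using this

theorem lift_step_B [Fintype V] (G : SimpleGraph V) (v : V) (d : ℕ)
    (hnb : ({u : V | G.Adj v u}).ncard ≤ d) (hk : d < k)
    (γ δ : V → Fin k) (i j : Fin k) (hij : i ≠ j) (u₀ : V) (hu₀ : u₀ ≠ v)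
    (hγ : IsProperColoring G k γ) (hagree : ∀ u, u ≠ v → γ u = δ u)
    (hvi : γ v = i) :
    ∃ γ', IsProperColoring G k γ' ∧
      (∀ u, u ≠ v → γ' u = kswap (erase G v) δ i j u₀ u) ∧ KempeEquiv G γ γ' := by
  classical
  by_cases hB1 : ∃ a : Fin k, a ≠ i ∧ a ≠ j ∧ ∀ u, G.Adj v u → γ u ≠ a
  · obtain ⟨a, hai, haj, ha⟩ := hB1
    set γ₁ := kswap G γ i a v with hγ₁def
    have hiso : ∀ u, ¬ (twoColorSub G γ i a).Adj v u := by
      rintro u ⟨hadj, _, hcu⟩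
      rcases hcu with h | h
      · exact (hγ hadj) (hvi.trans h.symm)
      · exact ha u hadj h
    have hup : γ₁ = Function.update γ v (Equiv.swap i a (γ v)) := kswap_isolated hiso
    have hγ₁ : IsProperColoring G k γ₁ := kswap_proper hγ
    have hγ₁v : γ₁ v = a := by
      rw [hup, Function.update_self, hvi, Equiv.swap_apply_left]
    have hγ₁agree : ∀ u, u ≠ v → γ₁ u = δ u := by
      intro u hu
      rw [hup, Function.update_of_ne hu]
      exact hagree u hu
    have hiso2 : ∀ u, (twoColorSub G γ₁ i j).Adj v u → u = v := by
      rintro u ⟨hadj, hcv, _⟩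
      rcases hcv with h | h
      · exact absurd (hγ₁v.symm.trans h) hai
      · exact absurd (hγ₁v.symm.trans h) haj
    obtain ⟨γ', hp, hag, he⟩ :=
      lift_easy G v γ₁ δ i j hij u₀ hu₀ hγ₁ hγ₁agree v hiso2
    refine ⟨γ', hp, hag, ?_⟩
    exact (Relation.ReflTransGen.single (kempeStep_kswap (Ne.symm hai) v)).trans he
  · push_neg at hB1
    have hB2 : ∀ a : Fin k, a ≠ i → a ≠ j → ∃ u, G.Adj v u ∧ γ u = a := by
      intro a hai haj
      obtain ⟨u, hu1, hu2⟩ := hB1 a hai haj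
      exact ⟨u, hu1, hu2⟩
    obtain ⟨w, hw⟩ := one_j_neighbor G v d hnb hk γ hγ i j hij hvi hB2
    exact lift_easy G v γ δ i j hij u₀ hu₀ hγ hagree w hw

theorem lift_step [Fintype V] (G : SimpleGraph V) (v : V) (d : ℕ)
    (hnb : ({u : V | G.Adj v u}).ncard ≤ d) (hk : d < k)
    (γ δ δ' : V → Fin k) (hγ : IsProperColoring G k γ)
    (hagree : ∀ u, u ≠ v → γ u = δ u)
    (hstep : KempeStep (erase G v) δ δ') :
    ∃ γ', IsProperColoring G k γ' ∧ (∀ u, u ≠ v → γ' u = δ' u) ∧ KempeEquiv G γ γ' := by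
  classical
  obtain ⟨i, j, hij, u₀, rfl⟩ := kempeStep_eq hstep
  by_cases hu₀ : u₀ = v
  · refine ⟨γ, hγ, ?_, Relation.ReflTransGen.refl⟩
    intro u hu
    have hnr : ¬ (twoColorSub (erase G v) δ i j).Reachable u₀ u := by
      intro hr
      have hiso : ∀ x, ¬ (twoColorSub (erase G v) δ i j).Adj u₀ x := by
        rintro x ⟨hadj, -, -⟩
        exact absurd hu₀ hadj.2.1
      exact hu ((reachable_of_isolated hiso hr) ▸ hu₀)
    simp only [kswap, if_neg hnr]
    exact hagree u hu
  · by_cases hvi : γ v = i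
    · exact lift_step_B G v d hnb hk γ δ i j hij u₀ hu₀ hγ hagree hvi
    by_cases hvj : γ v = j
    · obtain ⟨γ', h1, h2, h3⟩ :=
        lift_step_B G v d hnb hk γ δ j i hij.symm u₀ hu₀ hγ hagree hvj
      rw [kswap_comm (erase G v) δ j i u₀] at h2
      exact ⟨γ', h1, h2, h3⟩
    · have hiso : ∀ u, (twoColorSub G γ i j).Adj v u → u = v := by
        rintro u ⟨-, hcv, -⟩
        rcases hcv with h | h
        · exact absurd h hvi
        · exact absurd h hvj
      exact lift_easy G v γ δ i j hij u₀ hu₀ hγ hagree v hiso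

theorem lift_chain [Fintype V] (G : SimpleGraph V) (v : V) (d : ℕ)
    (hnb : ({u : V | G.Adj v u}).ncard ≤ d) (hk : d < k)
    {δ δ' : V → Fin k}
    (h : Relation.ReflTransGen (fun a b : V → Fin k => KempeStep (erase G v) a b) δ δ') :
    ∀ γ : V → Fin k, IsProperColoring G k γ → (∀ u, u ≠ v → γ u = δ u) →
    ∃ γ', IsProperColoring G k γ' ∧ (∀ u, u ≠ v → γ' u = δ' u) ∧ KempeEquiv G γ γ' := by
  induction h with
  | refl => exact fun γ hγ hag => ⟨γ, hγ, hag, Relation.ReflTransGen.refl⟩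
  | tail hbc hstep ih =>
      intro γ hγ hag
      obtain ⟨γ₁, h1, h2, h3⟩ := ih γ hγ hag
      obtain ⟨γ', h1', h2', h3'⟩ := lift_step G v d hnb hk γ₁ _ _ h1 h2 hstep
      exact ⟨γ', h1', h2', h3.trans h3'⟩

theorem kempe_edgeless [Fintype V] (G : SimpleGraph V) (hE : ∀ a b, ¬ G.Adj a b)
    (c c' : V → Fin k) : KempeEquiv G c c' := by
  classical
  suffices h : ∀ s : Finset V, ∀ c : V → Fin k,
      (∀ x, x ∉ s → c x = c' x) → KempeEquiv G c c' by
    exact h Finset.univ c (fun x hx => absurd (Finset.mem_univ x) hx)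
  intro s
  induction s using Finset.induction_on with
  | empty =>
      intro c hc
      have : c = c' := funext fun x => hc x (Finset.notMem_empty x)
      rw [this]
      exact Relation.ReflTransGen.refl
  | @insert a s ha ih =>
      intro c hc
      by_cases hca : c a = c' a
      · refine ih c (fun x hx => ?_)
        by_cases hxa : x = a
        · rw [hxa]; exact hca
        · exact hc x (fun h => (Finset.mem_insert.mp h).elim hxa hx)
      · set c₁ := kswap G c (c a) (c' a) a with hc₁def
        have hiso : ∀ u, ¬ (twoColorSub G c (c a) (c' a)).Adj a u :=
          fun u h => hE a u h.1
        have hup : c₁ = Function.update c a (Equiv.swap (c a) (c' a) (c a)) :=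
          kswap_isolated hiso
        have hc₁ : c₁ = Function.update c a (c' a) := by
          rw [hup, Equiv.swap_apply_left]
        have hstep : KempeStep G c c₁ := kempeStep_kswap hca a
        refine (Relation.ReflTransGen.single hstep).trans (ih c₁ (fun x hx => ?_))
        by_cases hxa : x = a
        · rw [hxa, hc₁, Function.update_self]
        · rw [hc₁, Function.update_of_ne hxa]
          exact hc x (fun h => (Finset.mem_insert.mp h).elim hxa hx)

end KempeAux


open KempeAux in
/-- For a `d`-degenerate graph `G` with `d ≥ 1` and any `k > d`, every
two proper `k`-colorings of `G` are Kempe equivalent. -/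
theorem kempe_equiv_of_degenerate {V : Type*} [Fintype V] (G : SimpleGraph V)
    (d : ℕ) (hd : 1 ≤ d)
    (hdeg : ∀ S : Set V, S.Nonempty → ∃ v ∈ S, (S ∩ {u : V | G.Adj v u}).ncard ≤ d)
    (k : ℕ) (hk : d < k)
    (c c' : V → Fin k) (hc : IsProperColoring G k c) (hc' : IsProperColoring G k c') :
    KempeEquiv G c c' := by
  classical
  suffices h : ∀ n (G : SimpleGraph V), G.edgeSet.ncard = n →
      (∀ S : Set V, S.Nonempty → ∃ v ∈ S, (S ∩ {u : V | G.Adj v u}).ncard ≤ d) →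
      ∀ c c' : V → Fin k, IsProperColoring G k c → IsProperColoring G k c' →
      KempeEquiv G c c' by
    exact h _ G rfl hdeg c c' hc hc'
  intro n
  induction n using Nat.strong_induction_on with
  | _ n ih =>
    intro G hn hdeg c c' hc hc'
    by_cases hE : ∀ a b, ¬ G.Adj a b
    · exact kempe_edgeless G hE c c'
    · push_neg at hE
      obtain ⟨a0, b0, hab⟩ := hE
      obtain ⟨v, hvS, hvd⟩ := hdeg {u | ∃ x, G.Adj u x} ⟨a0, b0, hab⟩
      have hnbsub : {u : V | G.Adj v u} ⊆ {u | ∃ x, G.Adj u x} :=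
        fun u hu => ⟨v, hu.symm⟩
      have hnb : ({u : V | G.Adj v u}).ncard ≤ d := by
        rwa [Set.inter_eq_self_of_subset_right hnbsub] at hvd
      obtain ⟨w₀, hvw₀⟩ := hvS
      -- the graph with the edges at v removed
      have hlt : (erase G v).edgeSet.ncard < n := by
        rw [← hn]
        apply Set.ncard_lt_ncard
        · constructor
          · exact SimpleGraph.edgeSet_mono (erase_le G v)
          · intro hsub
            have h1 : s(v, w₀) ∈ G.edgeSet := hvw₀
            have h2 := hsub h1
            rw [SimpleGraph.mem_edgeSet] at h2
            exact h2.2.1 rfl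
        · exact Set.toFinite _
      have hdeg' : ∀ S : Set V, S.Nonempty →
          ∃ x ∈ S, (S ∩ {u : V | (erase G v).Adj x u}).ncard ≤ d := by
        intro S hS
        obtain ⟨x, hx, hxd⟩ := hdeg S hS
        refine ⟨x, hx, le_trans (Set.ncard_le_ncard ?_ (Set.toFinite _)) hxd⟩
        exact fun u hu => ⟨hu.1, hu.2.1⟩
      have hcG' : IsProperColoring (erase G v) k c := fun u w h => hc h.1
      have hc'G' : IsProperColoring (erase G v) k c' := fun u w h => hc' h.1
      have hcc' : KempeEquiv (erase G v) c c' :=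
        ih _ hlt (erase G v) rfl hdeg' c c' hcG' hc'G'
      obtain ⟨γ', hp, hag, he⟩ :=
        lift_chain G v d hnb hk hcc' c hc (fun _ _ => rfl)
      by_cases hgv : γ' v = c' v
      · have : γ' = c' := funext fun u => by
          by_cases hu : u = v
          · rw [hu]; exact hgv
          · exact hag u hu
        rw [← this]; exact he
      · have hiso : ∀ u, ¬ (twoColorSub G γ' (γ' v) (c' v)).Adj v u := by
          rintro u ⟨hadj, -, hcu⟩
          rcases hcu with h | h
          · exact hp hadj h.symm
          · exact hc' hadj (((hag u hadj.ne').symm.trans h).symm)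
        have hup : kswap G γ' (γ' v) (c' v) v =
            Function.update γ' v (Equiv.swap (γ' v) (c' v) (γ' v)) := kswap_isolated hiso
        have hfin : kswap G γ' (γ' v) (c' v) v = c' := by
          rw [hup, Equiv.swap_apply_left]
          funext u
          by_cases hu : u = v
          · rw [hu, Function.update_self]
          · rw [Function.update_of_ne hu]
            exact hag u hu
        have hstep : KempeStep G γ' c' :=
          hfin ▸ kempeStep_kswap hgv v
        exact he.trans (Relation.ReflTransGen.single hstep)
end

section
/- Let G be a graph with two proper k-colorings c and c'. Suppose that for every pair of colors i ≠ j, the subgraph of G induced under c by vertices with colors i or j is connected, and suppose that under c' there is some pair of colors i ≠ j such that the subgraph induced by vertices with colors i or j is disconnected (i.e., has a Kempe component not isomorphic to any Kempe component of c). Then c and c' are not Kempe equivalent. -/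
open SimpleGraph

variable {V : Type*}

/-- Permuting the colors preserves the all-pairs connectivity property. -/
lemma conn_perm (G : SimpleGraph V) {k : ℕ} (c : V → Fin k) (σ : Equiv.Perm (Fin k))
    (hconn : ∀ i j : Fin k, i ≠ j →
      (G.induce {v : V | c v = i ∨ c v = j}).Connected) :
    ∀ i j : Fin k, i ≠ j →
      (G.induce {v : V | σ (c v) = i ∨ σ (c v) = j}).Connected := by
  intro i j hij
  have hset : {v : V | σ (c v) = i ∨ σ (c v) = j}
      = {v : V | c v = σ.symm i ∨ c v = σ.symm j} := by
    ext v
    simp [Set.mem_setOf_eq, Equiv.apply_eq_iff_eq_symm_apply]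
  rw [hset]
  exact hconn _ _ (fun h => hij (by simpa using congrArg σ h))

/-- If every two-color subgraph of `c` is connected, a Kempe step from `c` just
permutes the colors globally. -/
lemma kempe_step_perm (G : SimpleGraph V) {k : ℕ} (c c' : V → Fin k)
    (hconn : ∀ i j : Fin k, i ≠ j →
      (G.induce {v : V | c v = i ∨ c v = j}).Connected)
    (hstep : KempeStep G c c') :
    ∃ σ : Equiv.Perm (Fin k), c' = σ ∘ c := by
  obtain ⟨i, j, hij, v₀, h1, h2⟩ := hstep
  by_cases hv₀ : c v₀ = i ∨ c v₀ = j
  · refine ⟨Equiv.swap i j, funext fun v => ?_⟩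
    by_cases hv : c v = i ∨ c v = j
    · have hr : (twoColorSub G c i j).Reachable v₀ v := by
        have := (hconn i j hij).preconnected ⟨v₀, hv₀⟩ ⟨v, hv⟩
        refine this.map ⟨Subtype.val, ?_⟩
        rintro ⟨a, ha⟩ ⟨b, hb⟩ hab
        exact ⟨hab, ha, hb⟩
      obtain ⟨p1, p2, _⟩ := h1 v hr
      rcases hv with h | h
      · simp [Function.comp, h, p1 h, Equiv.swap_apply_left]
      · simp [Function.comp, h, p2 h, Equiv.swap_apply_right]
    · push_neg at hv
      have hcv : c' v = c v := by
        by_cases hr : (twoColorSub G c i j).Reachable v₀ v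
        · exact (h1 v hr).2.2 hv.1 hv.2
        · exact h2 v hr
      simp [Function.comp, hcv, Equiv.swap_apply_of_ne_of_ne hv.1 hv.2]
  · push_neg at hv₀
    refine ⟨1, funext fun v => ?_⟩
    by_cases hr : (twoColorSub G c i j).Reachable v₀ v
    · have hv : v = v₀ := by
        obtain ⟨p⟩ := hr
        cases p with
        | nil => rfl
        | cons h _ => exact absurd h.2.1 (by simp [hv₀.1, hv₀.2])
      subst hv
      exact (h1 v (Reachable.refl v)).2.2 hv₀.1 hv₀.2
    · exact h2 v hr

/-- If under `c` every two-color induced subgraph is connected, while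
under `c'` some two-color induced subgraph is disconnected, then `c` and `c'` are
not Kempe equivalent. -/
theorem not_kempe_equiv_of_connected_components {V : Type*} [Fintype V]
    (G : SimpleGraph V) (k : ℕ) (c c' : V → Fin k)
    (hc : IsProperColoring G k c) (hc' : IsProperColoring G k c')
    (hconn : ∀ i j : Fin k, i ≠ j →
      (G.induce {v : V | c v = i ∨ c v = j}).Connected)
    (hdisc : ∃ i j : Fin k, i ≠ j ∧
      ¬ (G.induce {v : V | c' v = i ∨ c' v = j}).Connected) :
    ¬ KempeEquiv G c c' := by
  intro hK
  have key : ∀ d : V → Fin k,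
      Relation.ReflTransGen (fun a b : V → Fin k => KempeStep G a b) c d →
      ∃ σ : Equiv.Perm (Fin k), d = σ ∘ c := by
    intro d hd
    induction hd with
    | refl => exact ⟨1, rfl⟩
    | tail hcb hstep ih =>
      obtain ⟨σ, rfl⟩ := ih
      obtain ⟨τ, hτ⟩ := kempe_step_perm G _ _ (conn_perm G c σ hconn) hstep
      exact ⟨τ * σ, by rw [hτ]; rfl⟩
  obtain ⟨σ, rfl⟩ := key c' hK
  obtain ⟨i, j, hij, hnc⟩ := hdisc
  exact hnc (conn_perm G c σ hconn i j hij)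
end

section
/- If a properly colored graph G admits a coloring c such that for all colors i ≠ j the subgraph G(i,j) induced by vertices of colors i and j is connected, then every coloring obtained from c by a sequence of Kempe changes induces the same partition of V(G) into color classes as c (up to a permutation of the colors). -/
open SimpleGraph

variable {V : Type*}

lemma reach_isolated {G : SimpleGraph V} {v₀ v : V} (h : ∀ u, ¬ G.Adj v₀ u)
    (hr : G.Reachable v₀ v) : v = v₀ := by
  obtain ⟨w⟩ := hr
  cases w with
  | nil => rfl
  | cons h' _ => exact absurd h' (h _)

lemma reach_all (G : SimpleGraph V) {k : ℕ} (c : V → Fin k)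
    (hconn : ∀ i j : Fin k, i ≠ j →
      (G.induce {v : V | c v = i ∨ c v = j}).Connected)
    (π : Equiv.Perm (Fin k)) {i j : Fin k} (hij : i ≠ j) {u v : V}
    (hu : π (c u) = i ∨ π (c u) = j) (hv : π (c v) = i ∨ π (c v) = j) :
    (twoColorSub G (π ∘ c) i j).Reachable u v := by
  set S : Set V := {v : V | c v = π.symm i ∨ c v = π.symm j} with hS
  have mem_iff : ∀ w : V, w ∈ S ↔ (π (c w) = i ∨ π (c w) = j) := by
    intro w
    simp [hS, Set.mem_setOf_eq, Equiv.eq_symm_apply]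
  have hij' : π.symm i ≠ π.symm j := fun hh => hij (by
    have := congrArg π hh; simpa using this)
  have hc := (hconn (π.symm i) (π.symm j) hij').preconnected
  have r := hc ⟨u, (mem_iff u).2 hu⟩ ⟨v, (mem_iff v).2 hv⟩
  let f : G.induce S →g twoColorSub G (π ∘ c) i j :=
    { toFun := Subtype.val
      map_rel' := by
        rintro ⟨a, ha⟩ ⟨b, hb⟩ hab
        exact ⟨hab, (mem_iff a).1 ha, (mem_iff b).1 hb⟩ }
  exact r.map f

/-- If under `c` all two-color induced subgraphs are connected, then
every coloring obtained from `c` by Kempe changes induces the same partition of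
the vertices into color classes, up to a permutation of the colors. -/
theorem kempe_equiv_partition_invariant {V : Type*} (G : SimpleGraph V) (k : ℕ)
    (c : V → Fin k) (hc : IsProperColoring G k c)
    (hconn : ∀ i j : Fin k, i ≠ j →
      (G.induce {v : V | c v = i ∨ c v = j}).Connected)
    (c' : V → Fin k) (h : KempeEquiv G c c') :
    ∃ π : Equiv.Perm (Fin k), c' = π ∘ c := by
  induction h with
  | refl => exact ⟨1, by ext v; simp⟩
  | @tail b d hb step ih =>
    obtain ⟨π, rfl⟩ := ih
    obtain ⟨i, j, hij, v₀, hR, hNR⟩ := step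
    by_cases h0 : π (c v₀) = i ∨ π (c v₀) = j
    · refine ⟨Equiv.swap i j * π, ?_⟩
      funext v
      show d v = (Equiv.swap i j) (π (c v))
      by_cases hv : π (c v) = i ∨ π (c v) = j
      · have hreach := reach_all G c hconn π hij h0 hv
        obtain ⟨h1, h2, h3⟩ := hR v hreach
        rcases hv with hv | hv
        · rw [hv, Equiv.swap_apply_left]; exact h1 hv
        · rw [hv, Equiv.swap_apply_right]; exact h2 hv
      · push_neg at hv
        have hviso : ∀ u, ¬ (twoColorSub G (π ∘ c) i j).Adj v u := by
          intro u hadj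
          exact absurd hadj.2.1 (by simp [hv.1, hv.2])
        have hnr : ¬ (twoColorSub G (π ∘ c) i j).Reachable v₀ v := by
          intro hr
          have := reach_isolated hviso hr.symm
          subst this
          exact absurd h0 (by simp [hv.1, hv.2])
        rw [Equiv.swap_apply_of_ne_of_ne hv.1 hv.2]
        exact hNR v hnr
    · push_neg at h0
      have hiso : ∀ u, ¬ (twoColorSub G (π ∘ c) i j).Adj v₀ u := by
        intro u hadj
        exact absurd hadj.2.1 (by simp [h0.1, h0.2])
      refine ⟨π, ?_⟩
      funext v
      show d v = π (c v)
      by_cases hv : (twoColorSub G (π ∘ c) i j).Reachable v₀ v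
      · rw [reach_isolated hiso hv]
        exact (hR v₀ (Reachable.refl _)).2.2 h0.1 h0.2
      · exact hNR v hv
end

section
/- Let G be a graph obtained from a bipartite graph with parts S and T by adding extra edges inside the parts, and suppose G is properly k-colored so that no added edge within S is an (i,j)-edge and no added edge within T is an (i,j)-edge, for some fixed colors i ≠ j. Then the k-coloring of G is Kempe equivalent to a k-coloring in which color i does not appear on S and color j does not appear on T. -/
open SimpleGraph

variable {V : Type*}

theorem kempe_aux {V : Type*} [Fintype V]
    (G : SimpleGraph V) (S : Set V) (H : SimpleGraph V) (hBE : IsBPlusE G S H)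
    (k : ℕ) (i j : Fin k) (hij : i ≠ j) :
    ∀ (n : ℕ) (c : V → Fin k), IsProperColoring G k c →
      (∀ u v : V, H.Adj u v → ¬ ((c u = i ∧ c v = j) ∨ (c u = j ∧ c v = i))) →
      ({v : V | (v ∈ S ∧ c v = i) ∨ (v ∉ S ∧ c v = j)}).ncard ≤ n →
      ∃ c' : V → Fin k, KempeEquiv G c c' ∧ IsProperColoring G k c' ∧
        (∀ v ∈ S, c' v ≠ i) ∧ (∀ v ∉ S, c' v ≠ j) := by
  classical
  intro n
  induction n with
  | zero =>
    intro c hc hno hcard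
    have hempty : {v : V | (v ∈ S ∧ c v = i) ∨ (v ∉ S ∧ c v = j)} = ∅ := by
      rw [← Set.ncard_eq_zero (Set.toFinite _)]
      omega
    refine ⟨c, Relation.ReflTransGen.refl, hc, ?_, ?_⟩
    · intro v hv hvi
      have : v ∈ ({v : V | (v ∈ S ∧ c v = i) ∨ (v ∉ S ∧ c v = j)}) := Or.inl ⟨hv, hvi⟩
      rw [hempty] at this; exact this
    · intro v hv hvj
      have : v ∈ ({v : V | (v ∈ S ∧ c v = i) ∨ (v ∉ S ∧ c v = j)}) := Or.inr ⟨hv, hvj⟩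
      rw [hempty] at this; exact this
  | succ n IH =>
    intro c hc hno hcard
    set Bad : Set V := {v : V | (v ∈ S ∧ c v = i) ∨ (v ∉ S ∧ c v = j)} with hBad
    by_cases hne : Bad = ∅
    · refine ⟨c, Relation.ReflTransGen.refl, hc, ?_, ?_⟩
      · intro v hv hvi
        have : v ∈ Bad := Or.inl ⟨hv, hvi⟩
        rw [hne] at this; exact this
      · intro v hv hvj
        have : v ∈ Bad := Or.inr ⟨hv, hvj⟩
        rw [hne] at this; exact this
    obtain ⟨v₀, hv₀⟩ := Set.nonempty_iff_ne_empty.mpr hne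
    have badcol : ∀ v : V, v ∈ Bad → c v = i ∨ c v = j := by
      rintro v (⟨_, h⟩ | ⟨_, h⟩)
      · exact Or.inl h
      · exact Or.inr h
    have hstep : ∀ u v : V, (twoColorSub G c i j).Adj u v → u ∈ Bad → v ∈ Bad := by
      rintro u v ⟨hGuv, hcu, hcv⟩ hbu
      have hne' : c u ≠ c v := hc hGuv
      have hnH : ¬ H.Adj u v := by
        intro hH
        apply hno u v hH
        rcases hcu with h1 | h1 <;> rcases hcv with h2 | h2
        · exact absurd (h1.trans h2.symm) hne'
        · exact Or.inl ⟨h1, h2⟩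
        · exact Or.inr ⟨h1, h2⟩
        · exact absurd (h1.trans h2.symm) hne'
      have hcross := hBE.2.1 u v hGuv hnH
      rcases hbu with ⟨huS, hui⟩ | ⟨huS, huj⟩
      · have hvS : v ∉ S := hcross.mp huS
        have hcvj : c v = j := by
          rcases hcv with h | h
          · exact absurd (hui.trans h.symm) hne'
          · exact h
        exact Or.inr ⟨hvS, hcvj⟩
      · have hvS : v ∈ S := by
          by_contra hvS
          exact huS (hcross.mpr hvS)
        have hcvi : c v = i := by
          rcases hcv with h | h
          · exact h
          · exact absurd (huj.trans h.symm) hne'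
        exact Or.inl ⟨hvS, hcvi⟩
    have hwalk : ∀ {a b : V}, (twoColorSub G c i j).Walk a b → a ∈ Bad → b ∈ Bad := by
      intro a b p
      induction p with
      | nil => exact id
      | cons h _ ih => exact fun ha => ih (hstep _ _ h ha)
    set R : V → Prop := fun v => (twoColorSub G c i j).Reachable v₀ v with hR
    have hreach : ∀ v : V, R v → v ∈ Bad := fun v hv => hv.elim fun p => hwalk p hv₀
    set c'' : V → Fin k := fun v => if R v then (if c v = i then j else i) else c v with hc''
    -- values of c'' on reachable vertices
    have hcRi : ∀ v : V, R v → c v = i → c'' v = j := by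
      intro v hv hvi
      simp only [hc'', if_pos hv, if_pos hvi]
    have hcRj : ∀ v : V, R v → c v = j → c'' v = i := by
      intro v hv hvj
      have : c v ≠ i := by rw [hvj]; exact (Ne.symm hij)
      simp only [hc'', if_pos hv, if_neg this]
    have hcN : ∀ v : V, ¬ R v → c'' v = c v := by
      intro v hv
      simp only [hc'', if_neg hv]
    have hcolR : ∀ v : V, R v → c v = i ∨ c v = j := fun v hv => badcol v (hreach v hv)
    -- Kempe step
    have hK : KempeStep G c c'' := by
      refine ⟨i, j, hij, v₀, ?_, hcN⟩
      intro v hv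
      refine ⟨hcRi v hv, hcRj v hv, ?_⟩
      intro h1 h2
      rcases hcolR v hv with h | h
      · exact absurd h h1
      · exact absurd h h2
    -- if reachable & unreachable adjacent, the unreachable one has color outside {i,j}
    have hbdry : ∀ u v : V, R u → ¬ R v → G.Adj u v → c v ≠ i ∧ c v ≠ j := by
      intro u v hu hv hadj
      have hcu := hcolR u hu
      constructor <;> intro h <;>
        exact hv (hu.trans (Adj.reachable ⟨hadj, hcu, by rw [h]; tauto⟩))
    -- c'' is proper
    have hc' : IsProperColoring G k c'' := by
      intro u v hadj
      by_cases hu : R u <;> by_cases hv : R v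
      · rcases hcolR u hu with h1 | h1 <;> rcases hcolR v hv with h2 | h2
        · exact absurd (h1.trans h2.symm) (hc hadj)
        · rw [hcRi u hu h1, hcRj v hv h2]; exact hij.symm
        · rw [hcRj u hu h1, hcRi v hv h2]; exact hij
        · exact absurd (h1.trans h2.symm) (hc hadj)
      · obtain ⟨h1, h2⟩ := hbdry u v hu hv hadj
        rw [hcN v hv]
        rcases hcolR u hu with h | h
        · rw [hcRi u hu h]; exact fun e => h2 e.symm
        · rw [hcRj u hu h]; exact fun e => h1 e.symm
      · obtain ⟨h1, h2⟩ := hbdry v u hv hu hadj.symm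
        rw [hcN u hu]
        rcases hcolR v hv with h | h
        · rw [hcRi v hv h]; exact fun e => h2 e
        · rw [hcRj v hv h]; exact fun e => h1 e
      · rw [hcN u hu, hcN v hv]; exact hc hadj
    -- added edges are still not (i,j)-edges
    have hno' : ∀ u v : V, H.Adj u v → ¬ ((c'' u = i ∧ c'' v = j) ∨ (c'' u = j ∧ c'' v = i)) := by
      intro u v hH
      have hadj : G.Adj u v := hBE.1 hH
      by_cases hu : R u <;> by_cases hv : R v
      · exfalso
        apply hno u v hH
        rcases hcolR u hu with h1 | h1 <;> rcases hcolR v hv with h2 | h2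
        · exact absurd (h1.trans h2.symm) (hc hadj)
        · exact Or.inl ⟨h1, h2⟩
        · exact Or.inr ⟨h1, h2⟩
        · exact absurd (h1.trans h2.symm) (hc hadj)
      · obtain ⟨h1, h2⟩ := hbdry u v hu hv hadj
        rw [hcN v hv]
        rintro (⟨_, h⟩ | ⟨_, h⟩)
        · exact h2 h
        · exact h1 h
      · obtain ⟨h1, h2⟩ := hbdry v u hv hu hadj.symm
        rw [hcN u hu]
        rintro (⟨h, _⟩ | ⟨h, _⟩)
        · exact h1 h
        · exact h2 h
      · rw [hcN u hu, hcN v hv]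
        exact hno u v hH
    -- the bad set shrinks
    set Bad' : Set V := {v : V | (v ∈ S ∧ c'' v = i) ∨ (v ∉ S ∧ c'' v = j)} with hBad'
    have hsub : Bad' ⊆ Bad := by
      intro v hv
      by_cases hr : R v
      · exact hreach v hr
      · have heq := hcN v hr
        rcases hv with ⟨a, b⟩ | ⟨a, b⟩
        · rw [heq] at b; exact Or.inl ⟨a, b⟩
        · rw [heq] at b; exact Or.inr ⟨a, b⟩
    have hv₀R : R v₀ := Reachable.refl v₀
    have hv₀not : v₀ ∉ Bad' := by
      rintro (⟨hS, hval⟩ | ⟨hS, hval⟩)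
      · rcases hv₀ with ⟨_, h⟩ | ⟨h, _⟩
        · rw [hcRi v₀ hv₀R h] at hval; exact hij hval.symm
        · exact h hS
      · rcases hv₀ with ⟨h, _⟩ | ⟨_, h⟩
        · exact hS h
        · rw [hcRj v₀ hv₀R h] at hval; exact hij hval
    have hss : Bad' ⊂ Bad := ⟨hsub, fun h => hv₀not (h hv₀)⟩
    have hcard' : Bad'.ncard ≤ n := by
      have := Set.ncard_lt_ncard hss (Set.toFinite _)
      omega
    obtain ⟨c', hKE, hc'p, hgi, hgj⟩ := IH c'' hc' hno' hcard'
    exact ⟨c', Relation.ReflTransGen.head hK hKE, hc'p, hgi, hgj⟩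


/-- If no added edge (inside `S` or inside `T = Sᶜ`) is an
`(i,j)`-edge, then the coloring is Kempe equivalent to one in which color `i`
does not appear on `S` and color `j` does not appear on `T`. -/
theorem kempe_equiv_avoid_colors_on_parts {V : Type*} [Fintype V]
    (G : SimpleGraph V) (S : Set V) (H : SimpleGraph V) (hBE : IsBPlusE G S H)
    (k : ℕ) (i j : Fin k) (hij : i ≠ j)
    (c : V → Fin k) (hc : IsProperColoring G k c)
    (hno : ∀ u v : V, H.Adj u v → ¬ ((c u = i ∧ c v = j) ∨ (c u = j ∧ c v = i))) :
    ∃ c' : V → Fin k, KempeEquiv G c c' ∧ IsProperColoring G k c' ∧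
      (∀ v ∈ S, c' v ≠ i) ∧ (∀ v ∉ S, c' v ≠ j) :=
  kempe_aux G S H hBE k i j hij
    ({v : V | (v ∈ S ∧ c v = i) ∨ (v ∉ S ∧ c v = j)}).ncard c hc hno le_rfl
end

section
/- Let G be a graph obtained from a bipartite graph with parts S and T by adding extra edges inside the parts, properly k-colored so that color i does not appear on S, and suppose no added edge inside T is an (i,j)-edge. Then the coloring is Kempe equivalent to a k-coloring in which color j does not appear on T. -/
open SimpleGraph

variable {V : Type*}

/-- If color `i` does not appear on `S` and no added edge inside
`T = Sᶜ` is an `(i,j)`-edge, then the coloring is Kempe equivalent to one in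
which color `j` does not appear on `T`. -/
theorem kempe_equiv_avoid_color_on_T {V : Type*} [Fintype V]
    (G : SimpleGraph V) (S : Set V) (H : SimpleGraph V) (hBE : IsBPlusE G S H)
    (k : ℕ) (i j : Fin k) (hij : i ≠ j)
    (c : V → Fin k) (hc : IsProperColoring G k c)
    (hS : ∀ v ∈ S, c v ≠ i)
    (hno : ∀ u v : V, H.Adj u v → u ∉ S → v ∉ S →
      ¬ ((c u = i ∧ c v = j) ∨ (c u = j ∧ c v = i))) :
    ∃ c' : V → Fin k, KempeEquiv G c c' ∧ IsProperColoring G k c' ∧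
      (∀ v ∉ S, c' v ≠ j) := by
  classical
  suffices h : ∀ n (c : V → Fin k), IsProperColoring G k c → (∀ v ∈ S, c v ≠ i) →
      (∀ u v : V, H.Adj u v → u ∉ S → v ∉ S →
        ¬ ((c u = i ∧ c v = j) ∨ (c u = j ∧ c v = i))) →
      (Finset.univ.filter (fun v => v ∉ S ∧ c v = j)).card ≤ n →
      ∃ c' : V → Fin k, KempeEquiv G c c' ∧ IsProperColoring G k c' ∧
        (∀ v ∉ S, c' v ≠ j) by
    exact h _ c hc hS hno le_rfl
  intro n
  induction n with
  | zero =>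
    intro c hc hS hno hcard
    refine ⟨c, Relation.ReflTransGen.refl, hc, ?_⟩
    intro v hv hj
    have : v ∈ Finset.univ.filter (fun v => v ∉ S ∧ c v = j) := by
      simp [hv, hj]
    have := Finset.card_pos.mpr ⟨v, this⟩
    omega
  | succ n ih =>
    intro c hc hS hno hcard
    by_cases hE : (Finset.univ.filter (fun v => v ∉ S ∧ c v = j)).Nonempty
    · obtain ⟨v₀, hv₀⟩ := hE
      rw [Finset.mem_filter] at hv₀
      obtain ⟨-, hv₀S, hv₀j⟩ := hv₀
      -- v₀ is isolated in the two-color subgraph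
      have hiso : ∀ w, ¬ (twoColorSub G c i j).Adj v₀ w := by
        rintro w ⟨hadj, -, hw⟩
        rcases hw with hwi | hwj
        · have hwS : w ∉ S := fun hws => hS w hws hwi
          by_cases hH : H.Adj v₀ w
          · exact hno v₀ w hH hv₀S hwS (Or.inr ⟨hv₀j, hwi⟩)
          · have := (hBE.2.1 v₀ w hadj hH)
            tauto
        · exact hc hadj (hv₀j.trans hwj.symm)
      have hreach : ∀ v, (twoColorSub G c i j).Reachable v₀ v → v = v₀ := by
        intro v hr
        obtain ⟨w⟩ := hr
        cases w with
        | nil => rfl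
        | cons h' _ => exact absurd h' (hiso _)
      set c' : V → Fin k := Function.update c v₀ i with hc'def
      have hc'v₀ : c' v₀ = i := Function.update_self _ _ _
      have hc'ne : ∀ v, v ≠ v₀ → c' v = c v := fun v hv =>
        Function.update_of_ne hv _ _
      -- properness of c'
      have hkey : ∀ v, G.Adj v₀ v → c v ≠ i := by
        intro v hadj hvi
        exact hiso v ⟨hadj, Or.inr hv₀j, Or.inl hvi⟩
      have hc' : IsProperColoring G k c' := by
        intro u v hadj
        by_cases hu : u = v₀
        · subst hu
          have hv : v ≠ u := (G.ne_of_adj hadj).symm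
          rw [hc'v₀, hc'ne v hv]
          exact fun h => hkey v hadj h.symm
        · by_cases hv : v = v₀
          · subst hv
            rw [hc'v₀, hc'ne u hu]
            exact fun h => hkey u hadj.symm h
          · rw [hc'ne u hu, hc'ne v hv]; exact hc hadj
      -- one Kempe step
      have hstep : KempeStep G c c' := by
        refine ⟨i, j, hij, v₀, ?_, ?_⟩
        · intro v hr
          have hv := hreach v hr
          subst hv
          exact ⟨fun h => absurd (h.symm.trans hv₀j) hij, fun _ => hc'v₀,
            fun _ h => absurd hv₀j h⟩
        · intro v hn
          have hv : v ≠ v₀ := fun h => hn (h ▸ Reachable.refl _)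
          exact hc'ne v hv
      -- hypotheses for c'
      have hS' : ∀ v ∈ S, c' v ≠ i := by
        intro v hv
        rw [hc'ne v (fun h => hv₀S (h ▸ hv))]
        exact hS v hv
      have hno' : ∀ u v : V, H.Adj u v → u ∉ S → v ∉ S →
          ¬ ((c' u = i ∧ c' v = j) ∨ (c' u = j ∧ c' v = i)) := by
        intro u v hH hu hv
        have hGadj : G.Adj u v := hBE.1 hH
        by_cases huv : u = v₀
        · subst huv
          have hvne : v ≠ u := (G.ne_of_adj hGadj).symm
          rw [hc'v₀, hc'ne v hvne]
          rintro (⟨-, hvj⟩ | ⟨hij', -⟩)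
          · exact hc hGadj (hv₀j.trans hvj.symm)
          · exact hij hij'
        · by_cases hvv : v = v₀
          · subst hvv
            rw [hc'v₀, hc'ne u huv]
            rintro (⟨-, hji⟩ | ⟨huj, -⟩)
            · exact hij hji
            · exact hc hGadj (huj.trans hv₀j.symm)
          · rw [hc'ne u huv, hc'ne v hvv]
            exact hno u v hH hu hv
      -- cardinality decreases
      have hsub : (Finset.univ.filter (fun v => v ∉ S ∧ c' v = j)) ⊆
          (Finset.univ.filter (fun v => v ∉ S ∧ c v = j)).erase v₀ := by
        intro v hv
        rw [Finset.mem_filter] at hv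
        obtain ⟨-, hvS, hvj⟩ := hv
        have hvne : v ≠ v₀ := by
          rintro rfl
          rw [hc'v₀] at hvj
          exact hij hvj
        rw [Finset.mem_erase, Finset.mem_filter]
        rw [hc'ne v hvne] at hvj
        exact ⟨hvne, Finset.mem_univ _, hvS, hvj⟩
      have hmem : v₀ ∈ Finset.univ.filter (fun v => v ∉ S ∧ c v = j) := by
        simp [hv₀S, hv₀j]
      have hcard' : (Finset.univ.filter (fun v => v ∉ S ∧ c' v = j)).card ≤ n := by
        have h1 := Finset.card_le_card hsub
        have h2 := Finset.card_erase_of_mem hmem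
        omega
      obtain ⟨c'', hequiv, hproper, hT⟩ := ih c' hc' hS' hno' hcard'
      exact ⟨c'', Relation.ReflTransGen.head hstep hequiv, hproper, hT⟩
    · refine ⟨c, Relation.ReflTransGen.refl, hc, ?_⟩
      intro v hv hj
      exact hE ⟨v, by simp [hv, hj]⟩
end

section
/- For every integer k ≥ 3 there exists a graph G obtained from a bipartite graph by adding a matching of size k(k-1)/2 inside one part, such that G has two proper k-colorings that are not Kempe equivalent; moreover there are infinitely many such graphs (of arbitrarily large order). -/
open SimpleGraph

variable {V : Type*}

open SimpleGraph

namespace KempeAux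

abbrev W (k n : ℕ) : Type := {p : Fin k × Fin k // p.1 ≠ p.2} ⊕ (Fin k × Fin (n+1))

variable {k n : ℕ}

def col : W k n → Fin k
  | .inl p => p.1.1
  | .inr t => t.1

def gAdj : W k n → W k n → Prop
  | .inl p, .inl q => p.1.1 = q.1.2 ∧ p.1.2 = q.1.1
  | .inl p, .inr t => p.1.1 ≠ t.1
  | .inr t, .inl p => p.1.1 ≠ t.1
  | .inr _, .inr _ => False

def hAdj : W k n → W k n → Prop
  | .inl p, .inl q => p.1.1 = q.1.2 ∧ p.1.2 = q.1.1
  | _, _ => False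

def G (k n : ℕ) : SimpleGraph (W k n) where
  Adj := gAdj
  symm := by
    constructor
    rintro (p | t) (q | s) h
    · exact ⟨h.2.symm, h.1.symm⟩
    · exact h
    · exact h
    · exact h
  loopless := by
    constructor
    rintro (p | t) h
    · exact p.2 h.1
    · exact h

def H (k n : ℕ) : SimpleGraph (W k n) where
  Adj := hAdj
  symm := by
    constructor
    rintro (p | t) (q | s) h
    · exact ⟨h.2.symm, h.1.symm⟩
    · exact h.elim
    · exact h.elim
    · exact h.elim
  loopless := by
    constructor
    rintro (p | t) h
    · exact p.2 h.1
    · exact h.elim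

lemma col_proper : IsProperColoring (G k n) k (col : W k n → Fin k) := by
  rintro (p | t) (q | s) h
  · show p.1.1 ≠ q.1.1
    rw [← h.2]; exact p.2
  · exact h
  · exact fun e => h e.symm
  · exact h.elim

lemma hAdj_iff (u v : W k n) : (H k n).Adj u v ↔ ∃ (x y : Fin k) (hxy : x ≠ y),
    u = Sum.inl ⟨(x, y), hxy⟩ ∧ v = Sum.inl ⟨(y, x), hxy.symm⟩ := by
  constructor
  · intro h
    match u, v with
    | .inl p, .inl q =>
      obtain ⟨h1, h2⟩ := h
      refine ⟨p.1.1, p.1.2, p.2, ?_, ?_⟩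
      · exact congrArg Sum.inl (Subtype.ext (Prod.ext_iff.2 ⟨rfl, rfl⟩))
      · exact congrArg Sum.inl (Subtype.ext (Prod.ext_iff.2 ⟨h2.symm, h1.symm⟩))
    | .inl p, .inr t => exact h.elim
    | .inr t, _ => exact h.elim
  · rintro ⟨x, y, hxy, rfl, rfl⟩
    exact ⟨rfl, rfl⟩

/-- Connectivity of the union of two color classes. -/
lemma conn (i j : Fin k) (hij : i ≠ j) :
    ∀ u : W k n, (col u = i ∨ col u = j) →
      (twoColorSub (G k n) col i j).Reachable (Sum.inr (i, 0)) u := by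
  have hb : (twoColorSub (G k n) (col (k := k) (n := n)) i j).Adj (Sum.inr (i, 0))
      (Sum.inl ⟨(j, i), hij.symm⟩) := ⟨hij.symm, Or.inl rfl, Or.inr rfl⟩
  have hba : (twoColorSub (G k n) (col (k := k) (n := n)) i j).Adj (Sum.inl ⟨(j, i), hij.symm⟩)
      (Sum.inl ⟨(i, j), hij⟩) := ⟨⟨rfl, rfl⟩, Or.inr rfl, Or.inl rfl⟩
  have hah' : (twoColorSub (G k n) (col (k := k) (n := n)) i j).Adj (Sum.inl ⟨(i, j), hij⟩)
      (Sum.inr (j, 0)) := ⟨hij, Or.inl rfl, Or.inr rfl⟩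
  have rb := hb.reachable
  have ra := rb.trans hba.reachable
  have rh' := ra.trans hah'.reachable
  rintro (p | t) hu
  · rcases hu with h | h
    · have h' : p.1.1 = i := h
      exact rh'.trans (Adj.reachable ⟨(h' ▸ hij : p.1.1 ≠ j), Or.inr rfl, Or.inl h⟩)
    · have h' : p.1.1 = j := h
      exact Adj.reachable ⟨(h' ▸ hij.symm : p.1.1 ≠ i), Or.inl rfl, Or.inr h⟩
  · rcases hu with h | h
    · have h' : t.1 = i := h
      exact rb.trans (Adj.reachable ⟨(by rw [h']; exact hij.symm : (j : Fin k) ≠ t.1),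
        Or.inr rfl, Or.inl h⟩)
    · have h' : t.1 = j := h
      exact ra.trans (Adj.reachable ⟨(by rw [h']; exact hij : (i : Fin k) ≠ t.1),
        Or.inl rfl, Or.inr h⟩)

lemma conn2 (i j : Fin k) (hij : i ≠ j) (u v : W k n)
    (hu : col u = i ∨ col u = j) (hv : col v = i ∨ col v = j) :
    (twoColorSub (G k n) col i j).Reachable u v :=
  (conn i j hij u hu).symm.trans (conn i j hij v hv)

lemma step_inv (c c'' : W k n → Fin k) (σ : Equiv.Perm (Fin k))
    (hc : c = ⇑σ ∘ col) (hs : KempeStep (G k n) c c'') :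
    ∃ τ : Equiv.Perm (Fin k), c'' = ⇑τ ∘ col := by
  subst hc
  obtain ⟨i, j, hij, v₀, h1, h2⟩ := hs
  have geq : twoColorSub (G k n) (⇑σ ∘ col) i j
      = twoColorSub (G k n) col (σ.symm i) (σ.symm j) := by
    ext u v
    show _ ∧ _ ↔ _ ∧ _
    simp only [Function.comp_apply, Equiv.apply_eq_iff_eq_symm_apply]
  have hne : σ.symm i ≠ σ.symm j := fun h => hij (σ.symm.injective h)
  by_cases hv₀ : col v₀ = σ.symm i ∨ col v₀ = σ.symm j
  · refine ⟨σ.trans (Equiv.swap i j), funext fun v => ?_⟩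
    by_cases hvi : col v = σ.symm i
    · have hre : (twoColorSub (G k n) (⇑σ ∘ col) i j).Reachable v₀ v := by
        rw [geq]; exact conn2 _ _ hne v₀ v hv₀ (Or.inl hvi)
      have hcv : (⇑σ ∘ col) v = i := by
        simp [Function.comp_apply, hvi]
      have := (h1 v hre).1 hcv
      show c'' v = Equiv.swap i j (σ (col v))
      rw [this, hvi]
      simp
    · by_cases hvj : col v = σ.symm j
      · have hre : (twoColorSub (G k n) (⇑σ ∘ col) i j).Reachable v₀ v := by
          rw [geq]; exact conn2 _ _ hne v₀ v hv₀ (Or.inr hvj)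
        have hcv : (⇑σ ∘ col) v = j := by simp [Function.comp_apply, hvj]
        have := (h1 v hre).2.1 hcv
        show c'' v = Equiv.swap i j (σ (col v))
        rw [this, hvj]
        simp
      · have hne1 : (⇑σ ∘ col) v ≠ i := fun h => hvi (by rw [← h]; simp)
        have hne2 : (⇑σ ∘ col) v ≠ j := fun h => hvj (by rw [← h]; simp)
        have goalr : Equiv.swap i j (σ (col v)) = σ (col v) :=
          Equiv.swap_apply_of_ne_of_ne hne1 hne2
        show c'' v = Equiv.swap i j (σ (col v))
        rw [goalr]
        by_cases hre : (twoColorSub (G k n) (⇑σ ∘ col) i j).Reachable v₀ v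
        · exact (h1 v hre).2.2 hne1 hne2
        · exact h2 v hre
  · refine ⟨σ, funext fun v => ?_⟩
    have hiso : ∀ w, ¬ (twoColorSub (G k n) (⇑σ ∘ col) i j).Adj v₀ w := by
      intro w hw
      apply hv₀
      rcases hw.2.1 with h | h
      · exact Or.inl (by rw [← h]; simp)
      · exact Or.inr (by rw [← h]; simp)
    have hsing : ∀ v, (twoColorSub (G k n) (⇑σ ∘ col) i j).Reachable v₀ v → v = v₀ := by
      intro v hr
      obtain ⟨w⟩ := hr
      cases w with
      | nil => rfl
      | cons h _ => exact absurd h (hiso _)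
    have hv₀i : (⇑σ ∘ col) v₀ ≠ i := fun h => hv₀ (Or.inl (by rw [← h]; simp))
    have hv₀j : (⇑σ ∘ col) v₀ ≠ j := fun h => hv₀ (Or.inr (by rw [← h]; simp))
    by_cases hre : (twoColorSub (G k n) (⇑σ ∘ col) i j).Reachable v₀ v
    · have hv : v = v₀ := hsing v hre
      subst hv
      exact (h1 v (Reachable.refl v)).2.2 hv₀i hv₀j
    · exact h2 v hre

lemma hle : (H k n) ≤ (G k n) := by
  rintro (p | t) (q | s) h
  · exact h
  · exact h.elim
  · exact h.elim
  · exact h.elim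

lemma edge_form : ∀ e ∈ (H k n).edgeSet, ∃ (x y : Fin k) (hxy : x ≠ y),
    e = s(Sum.inl ⟨(x, y), hxy⟩, Sum.inl ⟨(y, x), hxy.symm⟩) := by
  intro e he
  induction e using Sym2.ind with
  | _ u v =>
    rw [SimpleGraph.mem_edgeSet, hAdj_iff] at he
    obtain ⟨x, y, hxy, rfl, rfl⟩ := he
    exact ⟨x, y, hxy, rfl⟩

lemma map_not_diag : ∀ e ∈ (H k n).edgeSet, ¬ (Sym2.map col e).IsDiag := by
  intro e he
  obtain ⟨x, y, hxy, rfl⟩ := edge_form e he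
  rw [Sym2.map_pair_eq, Sym2.mk_isDiag_iff]
  exact hxy

lemma edge_card : Nat.card (H k n).edgeSet = Nat.card {s : Sym2 (Fin k) // ¬ s.IsDiag} := by
  apply Nat.card_congr
  refine Equiv.ofBijective
    (fun e => ⟨Sym2.map col e.1, map_not_diag e.1 e.2⟩) ⟨?_, ?_⟩
  · rintro ⟨e, he⟩ ⟨e', he'⟩ hmap
    simp only [Subtype.mk.injEq] at hmap ⊢
    obtain ⟨x, y, hxy, rfl⟩ := edge_form e he
    obtain ⟨x', y', hxy', rfl⟩ := edge_form e' he'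
    rw [Sym2.map_pair_eq, Sym2.map_pair_eq] at hmap
    have hmap' : s(x, y) = s(x', y') := hmap
    rw [Sym2.eq_iff] at hmap'
    rcases hmap' with ⟨rfl, rfl⟩ | ⟨rfl, rfl⟩
    · rfl
    · exact Sym2.eq_swap
  · rintro ⟨s, hs⟩
    revert hs
    induction s using Sym2.ind with
    | _ x y =>
      intro hs
      rw [Sym2.mk_isDiag_iff] at hs
      refine ⟨⟨s(Sum.inl ⟨(x, y), hs⟩, Sum.inl ⟨(y, x), Ne.symm hs⟩), ⟨rfl, rfl⟩⟩, ?_⟩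
      apply Subtype.ext
      show Sym2.map col s(Sum.inl ⟨(x, y), hs⟩, Sum.inl ⟨(y, x), Ne.symm hs⟩) = s(x, y)
      rw [Sym2.map_pair_eq]
      rfl

lemma edge_count : (H k n).edgeSet.ncard = k * (k - 1) / 2 := by
  classical
  rw [← Nat.card_coe_set_eq, edge_card, Nat.card_eq_fintype_card,
    Sym2.card_subtype_not_diag, Fintype.card_fin, Nat.choose_two_right]

lemma equiv_inv (d : W k n → Fin k) (hd : KempeEquiv (G k n) col d) :
    ∃ τ : Equiv.Perm (Fin k), d = ⇑τ ∘ col := by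
  induction hd with
  | refl => exact ⟨Equiv.refl _, rfl⟩
  | tail _ h2 ih =>
    obtain ⟨σ, hσ⟩ := ih
    exact step_inv _ _ σ hσ h2

end KempeAux

open KempeAux

/-- For every `k ≥ 3` and every `n`, there is a `B + M_ℓ` graph of
order at least `n`, with the matching of size `k(k-1)/2` lying inside one part,
having two proper `k`-colorings that are not Kempe equivalent. -/
theorem exists_BplusM_with_nonequivalent_colorings (k : ℕ) (hk : 3 ≤ k) (n : ℕ) :
    ∃ (V : Type) (_ : Fintype V) (G : SimpleGraph V) (S : Set V) (H : SimpleGraph V),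
      n ≤ Fintype.card V ∧
      IsBPlusE G S H ∧
      (∀ u v : V, H.Adj u v → u ∈ S ∧ v ∈ S) ∧
      (∀ u v w : V, H.Adj u v → H.Adj u w → v = w) ∧
      H.edgeSet.ncard = k * (k - 1) / 2 ∧
      ∃ c c' : V → Fin k, IsProperColoring G k c ∧ IsProperColoring G k c' ∧
        ¬ KempeEquiv G c c' := by
  classical
  refine ⟨W k n, inferInstance, G k n, Set.range Sum.inl, H k n, ?_, ⟨hle, ?_, ?_⟩, ?_, ?_,
    edge_count, col, Sum.elim (fun p => if p.1.1 < p.1.2 then (⟨1, by omega⟩ : Fin k)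
      else ⟨2, by omega⟩) (fun _ => ⟨0, by omega⟩), col_proper, ?_, ?_⟩
  · -- cardinality
    rw [Fintype.card_sum, Fintype.card_prod, Fintype.card_fin, Fintype.card_fin]
    have h1 : n + 1 ≤ k * (n + 1) := Nat.le_mul_of_pos_left (n + 1) (by omega)
    exact le_trans (by omega) (le_trans h1 (Nat.le_add_left _ _))
  · -- bipartite part
    rintro (p | t) (q | s) hG hH
    · exact absurd hG hH
    · simp
    · simp
    · exact hG.elim
  · -- H within parts
    rintro (p | t) (q | s) hH
    · simp
    · exact hH.elim
    · exact hH.elim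
    · exact hH.elim
  · -- matching inside S
    intro u v h
    rw [hAdj_iff] at h
    obtain ⟨x, y, hxy, rfl, rfl⟩ := h
    exact ⟨⟨_, rfl⟩, ⟨_, rfl⟩⟩
  · -- matching: disjoint edges
    intro u v w h1 h2
    rw [hAdj_iff] at h1 h2
    obtain ⟨x, y, hxy, rfl, rfl⟩ := h1
    obtain ⟨x', y', hxy', hu, rfl⟩ := h2
    simp only [Sum.inl.injEq, Subtype.mk.injEq, Prod.mk.injEq] at hu
    obtain ⟨rfl, rfl⟩ := hu
    rfl
  · -- c' proper
    rintro (p | t) (q | s) hadj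
    · obtain ⟨ha, hb⟩ := (hadj : _ ∧ _)
      simp only [Sum.elim_inl]
      rw [← ha, ← hb]
      rcases lt_or_gt_of_ne p.2 with h | h
      · rw [if_pos h, if_neg (lt_asymm h)]
        simp only [ne_eq, Fin.mk.injEq]
        omega
      · rw [if_neg (lt_asymm h), if_pos h]
        simp only [ne_eq, Fin.mk.injEq]
        omega
    · simp only [Sum.elim_inl, Sum.elim_inr]
      split_ifs <;> simp only [ne_eq, Fin.mk.injEq] <;> omega
    · simp only [Sum.elim_inl, Sum.elim_inr]
      split_ifs <;> simp only [ne_eq, Fin.mk.injEq] <;> omega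
    · exact hadj.elim
  · -- not Kempe equivalent
    intro hKE
    obtain ⟨τ, hτ⟩ := equiv_inv _ hKE
    have h0 := congrFun hτ (Sum.inr (⟨0, by omega⟩, 0))
    have h1 := congrFun hτ (Sum.inr (⟨1, by omega⟩, 0))
    simp only [Sum.elim_inr, Function.comp_apply] at h0 h1
    have heq : τ (col (Sum.inr ((⟨0, by omega⟩ : Fin k), (0 : Fin (n+1)))))
        = τ (col (Sum.inr ((⟨1, by omega⟩ : Fin k), (0 : Fin (n+1))))) := by
      rw [← h0, ← h1]
    have := τ.injective heq
    have : (⟨0, by omega⟩ : Fin k) = ⟨1, by omega⟩ := this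
    simp only [Fin.mk.injEq] at this
    omega
end

section
/- For every integer k ≥ 4 there exists a (k-1)-colorable graph G obtained from a bipartite graph by adding k(k-1)/2 edges inside the parts, such that G admits two proper k-colorings that are not Kempe equivalent. -/
open SimpleGraph

variable {V : Type*}

namespace KempeAux

/-- The example graph on `Fin k × Fin 3`. Row `i` is `{aᵢ=(i,0), bᵢ=(i,1), cᵢ=(i,2)}`.
Edges: `aᵢ~bⱼ`, `aᵢ~cⱼ` for `i ≠ j`, and `bᵢ~cⱼ` for `i < j`. -/
def Gk (k : ℕ) : SimpleGraph (Fin k × Fin 3) where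
  Adj u v := (u.2 = 0 ∧ v.2 ≠ 0 ∧ u.1 ≠ v.1) ∨ (v.2 = 0 ∧ u.2 ≠ 0 ∧ u.1 ≠ v.1)
    ∨ (u.2 = 1 ∧ v.2 = 2 ∧ u.1 < v.1) ∨ (u.2 = 2 ∧ v.2 = 1 ∧ v.1 < u.1)
  symm := by
    constructor
    rintro u v (h | h | h | h)
    · exact Or.inr (Or.inl ⟨h.1, h.2.1, h.2.2.symm⟩)
    · exact Or.inl ⟨h.1, h.2.1, h.2.2.symm⟩
    · exact Or.inr (Or.inr (Or.inr ⟨h.2.1, h.1, h.2.2⟩))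
    · exact Or.inr (Or.inr (Or.inl ⟨h.2.1, h.1, h.2.2⟩))
  loopless := by
    constructor
    rintro v (h | h | h | h)
    · exact h.2.2 rfl
    · exact h.2.2 rfl
    · rw [h.1] at h; exact absurd h.2.1 (by decide)
    · rw [h.1] at h; exact absurd h.2.1 (by decide)

/-- The added edges: `bᵢ ~ cⱼ` for `i < j`. -/
def Hk (k : ℕ) : SimpleGraph (Fin k × Fin 3) where
  Adj u v := (u.2 = 1 ∧ v.2 = 2 ∧ u.1 < v.1) ∨ (u.2 = 2 ∧ v.2 = 1 ∧ v.1 < u.1)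
  symm := by
    constructor
    rintro u v (h | h)
    · exact Or.inr ⟨h.2.1, h.1, h.2.2⟩
    · exact Or.inl ⟨h.2.1, h.1, h.2.2⟩
  loopless := by
    constructor
    rintro v (h | h) <;> · rw [h.1] at h; exact absurd h.2.1 (by decide)

variable {k : ℕ}

/-- Every vertex of a walk in a two-colored subgraph is either the start or colored i/j. -/
lemma walk_colored {W : Type*} {G : SimpleGraph W} {n : ℕ} {d : W → Fin n} {i j : Fin n} :
    ∀ {a b : W}, (twoColorSub G d i j).Walk a b → a = b ∨ d b = i ∨ d b = j := by
  intro a b w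
  induction w with
  | nil => exact Or.inl rfl
  | @cons a c b h p ih =>
    rcases ih with rfl | hc
    · exact Or.inr h.2.2
    · exact Or.inr hc

def SamePart (d : Fin k × Fin 3 → Fin k) : Prop := ∀ u v, d u = d v ↔ u.1 = v.1

lemma hchain {d : Fin k × Fin 3 → Fin k} {i j : Fin k} {p q : Fin k} (hpq : p < q)
    (hp : ∀ t, d (p, t) = i ∨ d (p, t) = j) (hq : ∀ t, d (q, t) = i ∨ d (q, t) = j) :
    ∀ x y : Fin k × Fin 3, (x.1 = p ∨ x.1 = q) → (y.1 = p ∨ y.1 = q) →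
      (twoColorSub (Gk k) d i j).Reachable x y := by
  have hne : p ≠ q := hpq.ne
  have a1 : (twoColorSub (Gk k) d i j).Adj (p, 0) (q, 1) :=
    ⟨Or.inl ⟨rfl, (by decide : (1:Fin 3) ≠ 0), hne⟩, hp 0, hq 1⟩
  have a2 : (twoColorSub (Gk k) d i j).Adj (p, 0) (q, 2) :=
    ⟨Or.inl ⟨rfl, (by decide : (2:Fin 3) ≠ 0), hne⟩, hp 0, hq 2⟩
  have a3 : (twoColorSub (Gk k) d i j).Adj (q, 2) (p, 1) :=
    ⟨Or.inr (Or.inr (Or.inr ⟨rfl, rfl, hpq⟩)), hq 2, hp 1⟩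
  have a4 : (twoColorSub (Gk k) d i j).Adj (p, 1) (q, 0) :=
    ⟨Or.inr (Or.inl ⟨rfl, (by decide : (1:Fin 3) ≠ 0), hne⟩), hp 1, hq 0⟩
  have a5 : (twoColorSub (Gk k) d i j).Adj (q, 0) (p, 2) :=
    ⟨Or.inl ⟨rfl, (by decide : (2:Fin 3) ≠ 0), hne.symm⟩, hq 0, hp 2⟩
  have rq1 : (twoColorSub (Gk k) d i j).Reachable (p, 0) (q, 1) := a1.reachable
  have rq2 : (twoColorSub (Gk k) d i j).Reachable (p, 0) (q, 2) := a2.reachable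
  have rp1 : (twoColorSub (Gk k) d i j).Reachable (p, 0) (p, 1) := rq2.trans a3.reachable
  have rq0 : (twoColorSub (Gk k) d i j).Reachable (p, 0) (q, 0) := rp1.trans a4.reachable
  have rp2 : (twoColorSub (Gk k) d i j).Reachable (p, 0) (p, 2) := rq0.trans a5.reachable
  have key : ∀ z : Fin k × Fin 3, (z.1 = p ∨ z.1 = q) →
      (twoColorSub (Gk k) d i j).Reachable (p, 0) z := by
    rintro ⟨r, t⟩ (rfl | rfl) <;> fin_cases t
    · exact Reachable.refl _
    · exact rp1
    · exact rp2
    · exact rq0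
    · exact rq1
    · exact rq2
  intro x y hx hy
  exact (key x hx).symm.trans (key y hy)

lemma kempe_preserves {d e : Fin k × Fin 3 → Fin k} (hd : SamePart d)
    (hstep : KempeStep (Gk k) d e) : SamePart e := by
  obtain ⟨i, j, hij, v₀, h1, h2⟩ := hstep
  by_cases hv₀ : d v₀ = i ∨ d v₀ = j
  · -- the full i,j chain is swapped
    have hrow : ∀ (r : Fin k) (t t' : Fin 3), d (r, t) = d (r, t') :=
      fun r t t' => (hd _ _).mpr rfl
    have hinj : Function.Injective (fun r : Fin k => d (r, 0)) :=
      fun r r' h => (hd _ _).mp h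
    have hsurj : Function.Surjective (fun r : Fin k => d (r, 0)) :=
      Finite.injective_iff_surjective.mp hinj
    obtain ⟨p, hp⟩ := hsurj i
    obtain ⟨q, hq⟩ := hsurj j
    simp only at hp hq
    have hpq : p ≠ q := fun h => hij (by rw [← hp, ← hq, h])
    have hprow : ∀ t, d (p, t) = i ∨ d (p, t) = j := fun t => Or.inl ((hrow p t 0).trans hp)
    have hqrow : ∀ t, d (q, t) = i ∨ d (q, t) = j := fun t => Or.inr ((hrow q t 0).trans hq)
    have hmem : ∀ v : Fin k × Fin 3, (d v = i ∨ d v = j) → (v.1 = p ∨ v.1 = q) := by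
      rintro v (hv | hv)
      · exact Or.inl ((hd v (p, 0)).mp (by rw [hv, hp]))
      · exact Or.inr ((hd v (q, 0)).mp (by rw [hv, hq]))
    have reach : ∀ x y : Fin k × Fin 3, (d x = i ∨ d x = j) → (d y = i ∨ d y = j) →
        (twoColorSub (Gk k) d i j).Reachable x y := by
      intro x y hx hy
      rcases lt_or_gt_of_ne hpq with h | h
      · exact hchain h hprow hqrow x y (hmem x hx) (hmem y hy)
      · exact hchain h hqrow hprow x y (hmem x hx).symm (hmem y hy).symm
    have hswap : ∀ v, e v = Equiv.swap i j (d v) := by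
      intro v
      by_cases hv : d v = i ∨ d v = j
      · obtain ⟨e1, e2, _⟩ := h1 v (reach v₀ v hv₀ hv)
        rcases hv with hv | hv
        · rw [hv, Equiv.swap_apply_left]; exact e1 hv
        · rw [hv, Equiv.swap_apply_right]; exact e2 hv
      · push_neg at hv
        have hnr : ¬ (twoColorSub (Gk k) d i j).Reachable v₀ v := by
          rintro ⟨w⟩
          rcases walk_colored w with rfl | hc
          · exact absurd hv₀ (by simp [hv.1, hv.2])
          · exact absurd hc (by simp [hv.1, hv.2])
        rw [h2 v hnr, Equiv.swap_apply_of_ne_of_ne hv.1 hv.2]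
    intro u v
    rw [hswap u, hswap v, Equiv.apply_eq_iff_eq]
    exact hd u v
  · -- nothing changes
    push_neg at hv₀
    have he : ∀ v, e v = d v := by
      intro v
      by_cases hvv : v = v₀
      · subst hvv
        exact (h1 v (Reachable.refl _)).2.2 hv₀.1 hv₀.2
      · refine h2 v ?_
        rintro ⟨w⟩
        rcases walk_colored w.reverse with h | hc
        · exact hvv h
        · exact absurd hc (by simp [hv₀.1, hv₀.2])
    rw [show e = d from funext he]
    exact hd

lemma card_Hk (k : ℕ) : (Hk k).edgeSet.ncard = k * (k - 1) / 2 := by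
  classical
  have hb : Function.Bijective
      (fun p : {p : Fin k × Fin k // p.1 < p.2} =>
        (⟨s(((p.1.1 : Fin k), (1 : Fin 3)), ((p.1.2 : Fin k), (2 : Fin 3))),
          Or.inl ⟨rfl, rfl, p.2⟩⟩ : (Hk k).edgeSet)) := by
    constructor
    · rintro ⟨⟨a, b⟩, hab⟩ ⟨⟨a', b'⟩, hab'⟩ h
      replace h := congrArg Subtype.val h
      simp only [Subtype.mk.injEq, Sym2.eq, Sym2.rel_iff', Prod.mk.injEq, Prod.swap_prod_mk]
      at h
      rcases h with ⟨⟨h1, _⟩, ⟨h2, _⟩⟩ | ⟨⟨_, h⟩, _⟩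
      · simp [h1, h2]
      · exact absurd h (by decide)
    · rintro ⟨e, he⟩
      induction e with
      | _ u v =>
        obtain ⟨ui, ut⟩ := u
        obtain ⟨vi, vt⟩ := v
        rcases he with ⟨hu, hv, hlt⟩ | ⟨hu, hv, hlt⟩ <;>
          simp only at hu hv <;> subst hu <;> subst hv
        · exact ⟨⟨(ui, vi), hlt⟩, rfl⟩
        · exact ⟨⟨(vi, ui), hlt⟩, Subtype.ext (Sym2.eq_swap)⟩
  have hcard := Nat.card_eq_of_bijective _ hb
  rw [Nat.card_coe_set_eq] at hcard
  rw [← hcard]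
  -- count pairs p.1 < p.2 in Fin k
  have e1 : {p : Fin k × Fin k // p.1 < p.2} ≃ (j : Fin k) × Fin (j : ℕ) :=
    { toFun := fun p => ⟨p.1.2, ⟨(p.1.1 : ℕ), p.2⟩⟩
      invFun := fun x => ⟨(⟨(x.2 : ℕ), lt_trans x.2.2 x.1.2⟩, x.1), x.2.2⟩
      left_inv := by rintro ⟨⟨a, b⟩, h⟩; rfl
      right_inv := by rintro ⟨a, b⟩; rfl }
  rw [Nat.card_eq_fintype_card, Fintype.card_congr e1, Fintype.card_sigma]
  simp only [Fintype.card_fin]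
  rw [Fin.sum_univ_eq_sum_range (fun i => i) k, Finset.sum_range_id]

lemma adj_fst_ne {u v : Fin k × Fin 3} (h : (Gk k).Adj u v) : u.1 ≠ v.1 := by
  rcases h with h | h | h | h
  · exact h.2.2
  · exact h.2.2
  · exact h.2.2.ne
  · exact h.2.2.ne'

lemma adj_snd_ne {u v : Fin k × Fin 3} (h : (Gk k).Adj u v) : u.2 ≠ v.2 := by
  intro heq
  rcases h with h | h | h | h
  · exact h.2.1 (heq ▸ h.1)
  · exact h.2.1 (heq.symm ▸ h.1)
  · rw [h.1, h.2.1] at heq; exact absurd heq (by decide)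
  · rw [h.1, h.2.1] at heq; exact absurd heq (by decide)

end KempeAux

/-- For every `k ≥ 4` there is a `(k-1)`-colorable `B + E_ℓ` graph
with `ℓ = k(k-1)/2` added edges having two proper `k`-colorings that are not
Kempe equivalent. -/
theorem exists_colorable_BplusE_with_nonequivalent_colorings (k : ℕ) (hk : 4 ≤ k) :
    ∃ (V : Type) (_ : Fintype V) (G : SimpleGraph V) (S : Set V) (H : SimpleGraph V),
      IsBPlusE G S H ∧
      G.Colorable (k - 1) ∧
      H.edgeSet.ncard = k * (k - 1) / 2 ∧
      ∃ c c' : V → Fin k, IsProperColoring G k c ∧ IsProperColoring G k c' ∧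
        ¬ KempeEquiv G c c' := by
  classical
  open KempeAux in
  refine ⟨Fin k × Fin 3, inferInstance, Gk k, {v | v.2 = 0}, Hk k,
    ⟨?_, ?_, ?_⟩, ?_, card_Hk k, ?_⟩
  · -- H ≤ G
    rintro u v (h | h)
    · exact Or.inr (Or.inr (Or.inl h))
    · exact Or.inr (Or.inr (Or.inr h))
  · -- non-H edges cross
    rintro u v (h | h | h | h) hH
    · exact ⟨fun _ => h.2.1, fun _ => h.1⟩
    · exact ⟨fun hu => absurd hu h.2.1, fun hv => absurd h.1 hv⟩
    · exact absurd (Or.inl h) hH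
    · exact absurd (Or.inr h) hH
  · -- H edges inside parts
    rintro u v (h | h) <;>
      · show u.2 = 0 ↔ v.2 = 0
        rw [h.1, h.2.1]
        decide
  · -- (k-1)-colorable
    refine ⟨SimpleGraph.Coloring.mk
      (fun v => Fin.castLE (by omega : 3 ≤ k - 1) v.2) ?_⟩
    intro u v h hc
    exact adj_snd_ne h (Fin.castLE_injective _ hc)
  · refine ⟨fun v => v.1, fun v => Fin.castLE (by omega : 3 ≤ k) v.2, ?_, ?_, ?_⟩
    · exact fun u v h => adj_fst_ne h
    · exact fun u v h hc => adj_snd_ne h (Fin.castLE_injective _ hc)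
    · intro h
      have hsp : SamePart (fun v : Fin k × Fin 3 => Fin.castLE (by omega : 3 ≤ k) v.2) := by
        have key : ∀ d, KempeEquiv (Gk k) (fun v : Fin k × Fin 3 => v.1) d → SamePart d := by
          intro d hd
          induction hd with
          | refl => exact fun u v => Iff.rfl
          | tail _ hstep ih => exact kempe_preserves ih hstep
        exact key _ h
      have h01 := (hsp ((⟨0, by omega⟩ : Fin k), 0) ((⟨1, by omega⟩ : Fin k), 0)).mp rfl
      simp only [Fin.mk.injEq] at h01
      omega
end
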